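/- arXiv:1307.4035 — 4 statements merged into one kernel-verified Lean document; each statement's English description precedes it below -/
import Mathlib

section
/- Let f : {-1,+1}^k → {-1,+1} be monotone and odd (f(−x) = −f(x)). Let X_1,…,X_k be i.i.d. random variables with P(X_i = +1) = p > 1/2 and P(X_i = −1) = 1−p. Then P(f(X_1,…,X_k) = +1) ≥ p. -/
open Finset MeasureTheory ProbabilityTheory

set_option linter.unusedSectionVars false
set_option linter.unreachableTactic false
set_option linter.unusedTactic false
set_option maxHeartbeats 1000000

namespace Stmt12

variable {ι : Type*} [DecidableEq ι]

/-- weight of a set `S` inside ground set `E` at parameter `r` -/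
noncomputable def W (r : ℝ) (E S : Finset ι) : ℝ :=
  r ^ S.card * (1 - r) ^ (E.card - S.card)

/-- derivative of `W` in `r` -/
noncomputable def Wd (r : ℝ) (E S : Finset ι) : ℝ :=
  (S.card : ℝ) * r ^ (S.card - 1) * (1 - r) ^ (E.card - S.card)
    - ((E.card - S.card : ℕ) : ℝ) * r ^ S.card * (1 - r) ^ (E.card - S.card - 1)

noncomputable def phi (r : ℝ) (E : Finset ι) (A : Finset (Finset ι)) : ℝ :=
  ∑ S ∈ A, W r E S

noncomputable def phid (r : ℝ) (E : Finset ι) (A : Finset (Finset ι)) : ℝ :=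
  ∑ S ∈ A, Wd r E S

lemma W_hasDerivAt (r : ℝ) (E S : Finset ι) :
    HasDerivAt (fun r => W r E S) (Wd r E S) r := by
  have h1 : HasDerivAt (fun x : ℝ => x ^ S.card)
      ((S.card : ℝ) * r ^ (S.card - 1)) r := hasDerivAt_pow _ _
  have h2 : HasDerivAt (fun x : ℝ => (1 - x) ^ (E.card - S.card))
      (((E.card - S.card : ℕ) : ℝ) * (1 - r) ^ (E.card - S.card - 1) * (-1)) r := by
    exact (hasDerivAt_pow (E.card - S.card) (1 - r)).comp r
      (((hasDerivAt_id r).const_sub 1))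
  have := h1.mul h2
  refine this.congr_deriv ?_
  unfold Wd
  ring

lemma phi_hasDerivAt (r : ℝ) (E : Finset ι) (A : Finset (Finset ι)) :
    HasDerivAt (fun r => phi r E A) (phid r E A) r := by
  exact HasDerivAt.fun_sum fun S _ => W_hasDerivAt r E S

lemma W_nonneg {r : ℝ} (h0 : 0 ≤ r) (h1 : r ≤ 1) (E S : Finset ι) : 0 ≤ W r E S :=
  mul_nonneg (pow_nonneg h0 _) (pow_nonneg (by linarith) _)

lemma phi_nonneg {r : ℝ} (h0 : 0 ≤ r) (h1 : r ≤ 1) (E : Finset ι) (A : Finset (Finset ι)) :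
    0 ≤ phi r E A := Finset.sum_nonneg fun S _ => W_nonneg h0 h1 E S

lemma total_weight {r : ℝ} (E : Finset ι) :
    ∑ S ∈ E.powerset, W r E S = 1 := by
  have h := Finset.prod_add (fun _ : ι => r) (fun _ : ι => 1 - r) E
  simp only [Finset.prod_const] at h
  have h2 : ∀ S ∈ E.powerset, r ^ S.card * (1-r) ^ (E \ S).card = W r E S := by
    intro S hS
    rw [Finset.mem_powerset] at hS
    rw [Finset.card_sdiff_of_subset hS]; rfl
  rw [Finset.sum_congr rfl h2] at h
  rw [← h]
  simp

lemma phi_le_one {r : ℝ} (h0 : 0 ≤ r) (h1 : r ≤ 1) (E : Finset ι) (A : Finset (Finset ι))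
    (hA : ∀ S ∈ A, S ⊆ E) : phi r E A ≤ 1 := by
  rw [← total_weight (r := r) E]
  apply Finset.sum_le_sum_of_subset_of_nonneg
  · intro S hS; exact Finset.mem_powerset.2 (hA S hS)
  · intro S _ _; exact W_nonneg h0 h1 E S

/-- up-closed family over ground set `E` -/
def UC (E : Finset ι) (A : Finset (Finset ι)) : Prop :=
  (∀ S ∈ A, S ⊆ E) ∧ ∀ S ∈ A, ∀ i ∈ E, insert i S ∈ A

-- pure real auxiliary identities
lemma Wd_aux1 (a b : ℕ) (r : ℝ) :
    ((a+1:ℕ):ℝ) * r^(a+1-1) * (1-r)^b - (b:ℝ)*r^(a+1)*(1-r)^(b-1)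
      = r * ((a:ℝ)*r^(a-1)*(1-r)^b - (b:ℝ)*r^a*(1-r)^(b-1)) + r^a*(1-r)^b := by
  cases a with
  | zero => cases b with
    | zero => norm_num
    | succ m => push_cast; simp only [pow_succ, Nat.add_sub_cancel, pow_zero]; ring
  | succ n => cases b with
    | zero => push_cast; simp only [Nat.add_sub_cancel, pow_succ]; ring
    | succ m => push_cast; simp only [Nat.add_sub_cancel, pow_succ]; ring

lemma Wd_aux2 (a b : ℕ) (r : ℝ) :
    (a:ℝ)*r^(a-1)*(1-r)^(b+1) - ((b+1:ℕ):ℝ)*r^a*(1-r)^(b+1-1)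
      = (1-r) * ((a:ℝ)*r^(a-1)*(1-r)^b - (b:ℝ)*r^a*(1-r)^(b-1)) - r^a*(1-r)^b := by
  cases a with
  | zero => cases b with
    | zero => norm_num
    | succ m => push_cast; simp only [pow_succ, Nat.add_sub_cancel, pow_zero]; ring
  | succ n => cases b with
    | zero => push_cast; simp only [Nat.add_sub_cancel, pow_succ]; ring
    | succ m => push_cast; simp only [Nat.add_sub_cancel, pow_succ]; ring

lemma W_split_not {i : ι} {E S : Finset ι} (hiE : i ∉ E) (hS : S ⊆ E) (r : ℝ) :
    W r (insert i E) S = (1-r) * W r E S := by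
  have hc : S.card ≤ E.card := Finset.card_le_card hS
  unfold W
  rw [Finset.card_insert_of_notMem hiE]
  have : E.card + 1 - S.card = (E.card - S.card) + 1 := by omega
  rw [this, pow_succ]
  ring

lemma W_split_mem {i : ι} {E S : Finset ι} (hiE : i ∉ E) (hS : S ⊆ insert i E) (hiS : i ∈ S)
    (r : ℝ) : W r (insert i E) S = r * W r E (S.erase i) := by
  have he : S.erase i ⊆ E := by
    intro x hx
    rcases Finset.mem_erase.1 hx with ⟨hxi, hxS⟩
    rcases Finset.mem_insert.1 (hS hxS) with h | h
    · exact absurd h hxi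
    · exact h
  have hc : S.card = (S.erase i).card + 1 := by
    rw [Finset.card_erase_of_mem hiS]
    have : 1 ≤ S.card := Finset.card_pos.2 ⟨i, hiS⟩
    omega
  have hc2 : (S.erase i).card ≤ E.card := Finset.card_le_card he
  unfold W
  rw [Finset.card_insert_of_notMem hiE, hc]
  have : E.card + 1 - ((S.erase i).card + 1) = E.card - (S.erase i).card := by omega
  rw [this, pow_succ]
  ring

lemma Wd_split_not {i : ι} {E S : Finset ι} (hiE : i ∉ E) (hS : S ⊆ E) (r : ℝ) :
    Wd r (insert i E) S = (1-r) * Wd r E S - W r E S := by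
  have hc : S.card ≤ E.card := Finset.card_le_card hS
  unfold Wd W
  rw [Finset.card_insert_of_notMem hiE]
  have h1 : E.card + 1 - S.card = (E.card - S.card) + 1 := by omega
  rw [h1]
  have := Wd_aux2 S.card (E.card - S.card) r
  push_cast at this ⊢
  convert this using 3 <;> omega
  
lemma Wd_split_mem {i : ι} {E S : Finset ι} (hiE : i ∉ E) (hS : S ⊆ insert i E) (hiS : i ∈ S)
    (r : ℝ) : Wd r (insert i E) S = r * Wd r E (S.erase i) + W r E (S.erase i) := by
  have he : S.erase i ⊆ E := by
    intro x hx
    rcases Finset.mem_erase.1 hx with ⟨hxi, hxS⟩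
    rcases Finset.mem_insert.1 (hS hxS) with h | h
    · exact absurd h hxi
    · exact h
  have hc : S.card = (S.erase i).card + 1 := by
    rw [Finset.card_erase_of_mem hiS]
    have : 1 ≤ S.card := Finset.card_pos.2 ⟨i, hiS⟩
    omega
  have hc2 : (S.erase i).card ≤ E.card := Finset.card_le_card he
  unfold Wd W
  rw [Finset.card_insert_of_notMem hiE, hc]
  have h1 : E.card + 1 - ((S.erase i).card + 1) = E.card - (S.erase i).card := by omega
  rw [h1]
  have := Wd_aux1 (S.erase i).card (E.card - (S.erase i).card) r
  convert this using 3 <;> push_cast <;> omega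

/-- Key differential inequality (Russo + Poincaré combined):
for an up-closed family, `φ(1-φ) ≤ r(1-r) φ'`. -/
theorem key_DI (E : Finset ι) :
    ∀ A : Finset (Finset ι), UC E A → ∀ r : ℝ, 0 ≤ r → r ≤ 1 →
      phi r E A * (1 - phi r E A) ≤ r * (1-r) * phid r E A := by
  induction E using Finset.induction_on with
  | empty =>
    intro A hA r h0 h1
    have hsub : A ⊆ {∅} := by
      intro S hS
      simp only [Finset.mem_singleton]
      exact Finset.subset_empty.1 (hA.1 S hS)
    rcases Finset.subset_singleton_iff.1 hsub with h | h <;>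
      simp [h, phi, phid, W, Wd]
  | @insert i E hiE ih =>
    intro A hA r h0 h1
    set Aw := A.filter (fun S => i ∈ S) with hAw
    set Am := A.filter (fun S => i ∉ S) with hAm
    set Ap := Aw.image (fun S => S.erase i) with hAp
    -- basic membership facts
    have hmemA : ∀ S ∈ A, S ⊆ insert i E := hA.1
    have hMsub : ∀ S ∈ Am, S ⊆ E := by
      intro S hS
      rcases Finset.mem_filter.1 hS with ⟨hSA, hiS⟩
      intro x hx
      rcases Finset.mem_insert.1 (hmemA S hSA hx) with h | h
      · exact absurd (h ▸ hx) hiS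
      · exact h
    have hPsub : ∀ S ∈ Ap, S ⊆ E := by
      intro S hS
      rcases Finset.mem_image.1 hS with ⟨T, hT, rfl⟩
      rcases Finset.mem_filter.1 hT with ⟨hTA, hiT⟩
      intro x hx
      rcases Finset.mem_erase.1 hx with ⟨hxi, hxT⟩
      rcases Finset.mem_insert.1 (hmemA T hTA hxT) with h | h
      · exact absurd h hxi
      · exact h
    -- UC for Am
    have hUCm : UC E Am := by
      refine ⟨hMsub, ?_⟩
      intro S hS j hj
      rcases Finset.mem_filter.1 hS with ⟨hSA, hiS⟩
      refine Finset.mem_filter.2 ⟨hA.2 S hSA j (Finset.mem_insert_of_mem hj), ?_⟩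
      intro hmem
      rcases Finset.mem_insert.1 hmem with h | h
      · exact hiE (h ▸ hj)
      · exact hiS h
    -- UC for Ap
    have hUCp : UC E Ap := by
      refine ⟨hPsub, ?_⟩
      intro S hS j hj
      rcases Finset.mem_image.1 hS with ⟨T, hT, rfl⟩
      rcases Finset.mem_filter.1 hT with ⟨hTA, hiT⟩
      have hins : insert j T ∈ A := hA.2 T hTA j (Finset.mem_insert_of_mem hj)
      have hji : j ≠ i := fun h => hiE (h ▸ hj)
      refine Finset.mem_image.2 ⟨insert j T, Finset.mem_filter.2 ⟨hins, Finset.mem_insert_of_mem hiT⟩, ?_⟩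
      rw [Finset.erase_insert_of_ne hji]
    -- Am ⊆ Ap
    have hMP : Am ⊆ Ap := by
      intro S hS
      rcases Finset.mem_filter.1 hS with ⟨hSA, hiS⟩
      have hins : insert i S ∈ A := hA.2 S hSA i (Finset.mem_insert_self i E)
      refine Finset.mem_image.2 ⟨insert i S, Finset.mem_filter.2 ⟨hins, Finset.mem_insert_self i S⟩, ?_⟩
      exact Finset.erase_insert hiS
    -- injectivity of erase on Aw
    have hinj : ∀ x ∈ Aw, ∀ y ∈ Aw, x.erase i = y.erase i → x = y := by
      intro x hx y hy hxy
      rcases Finset.mem_filter.1 hx with ⟨_, hix⟩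
      rcases Finset.mem_filter.1 hy with ⟨_, hiy⟩
      rw [← Finset.insert_erase hix, ← Finset.insert_erase hiy, hxy]
    -- sum decompositions
    have hsplitA : ∀ g : Finset ι → ℝ, ∑ S ∈ A, g S = ∑ S ∈ Aw, g S + ∑ S ∈ Am, g S := by
      intro g
      rw [hAw, hAm, Finset.sum_filter_add_sum_filter_not]
    have hphi : phi r (insert i E) A = r * phi r E Ap + (1-r) * phi r E Am := by
      unfold phi
      rw [hsplitA]
      congr 1
      · rw [hAp, Finset.sum_image hinj, Finset.mul_sum]
        apply Finset.sum_congr rfl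
        intro S hS
        rcases Finset.mem_filter.1 hS with ⟨hSA, hiS⟩
        exact W_split_mem hiE (hmemA S hSA) hiS r
      · rw [Finset.mul_sum]
        apply Finset.sum_congr rfl
        intro S hS
        exact W_split_not hiE (hMsub S hS) r
    have hphid : phid r (insert i E) A
        = r * phid r E Ap + phi r E Ap + ((1-r) * phid r E Am - phi r E Am) := by
      unfold phid phi
      rw [hsplitA]
      congr 1
      · rw [hAp, Finset.sum_image hinj, Finset.sum_image hinj, Finset.mul_sum, ← Finset.sum_add_distrib]
        apply Finset.sum_congr rfl
        intro S hS
        rcases Finset.mem_filter.1 hS with ⟨hSA, hiS⟩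
        exact Wd_split_mem hiE (hmemA S hSA) hiS r
      · rw [Finset.mul_sum, ← Finset.sum_sub_distrib]
        apply Finset.sum_congr rfl
        intro S hS
        exact Wd_split_not hiE (hMsub S hS) r
    -- apply induction hypotheses
    have IHp := ih Ap hUCp r h0 h1
    have IHm := ih Am hUCm r h0 h1
    have h0p : 0 ≤ phi r E Ap := phi_nonneg h0 h1 E Ap
    have h0m : 0 ≤ phi r E Am := phi_nonneg h0 h1 E Am
    have h1p : phi r E Ap ≤ 1 := phi_le_one h0 h1 E Ap hPsub
    have hmp : phi r E Am ≤ phi r E Ap := by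
      apply Finset.sum_le_sum_of_subset_of_nonneg hMP
      intro S _ _; exact W_nonneg h0 h1 E S
    rw [hphi, hphid]
    nlinarith [mul_nonneg h0 (sub_nonneg.2 h1), sq_nonneg (phi r E Ap - phi r E Am),
      mul_nonneg (mul_nonneg h0 (sub_nonneg.2 h1)) (sub_nonneg.2 hmp)]

lemma phi_lt_one {r : ℝ} (h0 : 0 ≤ r) (h1 : r < 1) (E : Finset ι) (A : Finset (Finset ι))
    (hA : ∀ S ∈ A, S ⊆ E) (hbot : ∅ ∉ A) : phi r E A < 1 := by
  have hins : insert ∅ A ⊆ E.powerset := by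
    intro S hS
    rcases Finset.mem_insert.1 hS with h | h
    · simp [h]
    · exact Finset.mem_powerset.2 (hA S h)
  have hsum : phi r E A + W r E ∅ ≤ 1 := by
    rw [← total_weight (r := r) E]
    calc phi r E A + W r E ∅ = ∑ S ∈ insert ∅ A, W r E S := by
          rw [Finset.sum_insert hbot]; unfold phi; ring
      _ ≤ ∑ S ∈ E.powerset, W r E S := by
          apply Finset.sum_le_sum_of_subset_of_nonneg hins
          intro S _ _; exact W_nonneg h0 (le_of_lt h1) E S
  have hW : 0 < W r E ∅ := by
    unfold W
    simp only [Finset.card_empty, pow_zero, one_mul, Nat.sub_zero]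
    exact pow_pos (by linarith) _
  linarith

lemma phi_at_one (E : Finset ι) (A : Finset (Finset ι)) (hA : ∀ S ∈ A, S ⊆ E)
    (htop : E ∈ A) : phi 1 E A = 1 := by
  unfold phi
  rw [Finset.sum_eq_single E]
  · unfold W; simp
  · intro S hS hne
    have hsub : S ⊆ E := hA S hS
    have hlt : S.card < E.card := Finset.card_lt_card (Finset.ssubset_iff_subset_ne.2 ⟨hsub, hne⟩)
    unfold W
    have h0 : E.card - S.card ≠ 0 := by omega
    rw [show (1:ℝ)-1 = 0 from by ring, zero_pow h0, mul_zero]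
  · intro h; exact absurd htop h

theorem phi_ge_p (E : Finset ι) (A : Finset (Finset ι)) (hA : UC E A)
    (hhalf : phi (1/2) E A = 1/2) (hbot : ∅ ∉ A) (htop : E ∈ A) :
    ∀ p : ℝ, 1/2 ≤ p → p ≤ 1 → p ≤ phi p E A := by
  intro p hp12 hp1
  rcases eq_or_lt_of_le hp1 with rfl | hplt
  · rw [phi_at_one E A hA.1 htop]
  -- p < 1 : use monotonicity of Ψ on [1/2, 1)
  set Ψ : ℝ → ℝ := fun r => (phi r E A * (1-r)) / (r * (1 - phi r E A)) with hΨ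
  have hcphi : Continuous (fun r => phi r E A) := by
    rw [continuous_iff_continuousAt]
    exact fun x => (phi_hasDerivAt x E A).continuousAt
  have hden_pos : ∀ r ∈ Set.Ico (1/2 : ℝ) 1, 0 < r * (1 - phi r E A) := by
    intro r hr
    rcases hr with ⟨h1, h2⟩
    have := phi_lt_one (by linarith) h2 E A hA.1 hbot
    have : 0 < 1 - phi r E A := by linarith
    positivity
  have hmono : MonotoneOn Ψ (Set.Ico (1/2 : ℝ) 1) := by
    apply monotoneOn_of_deriv_nonneg (convex_Ico _ _)
    · apply ContinuousOn.div
      · exact (hcphi.mul (continuous_const.sub continuous_id)).continuousOn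
      · exact (continuous_id.mul (continuous_const.sub hcphi)).continuousOn
      · intro r hr; exact ne_of_gt (hden_pos r hr)
    · rw [interior_Ico]
      intro r hr
      rcases hr with ⟨h1, h2⟩
      have hd := hden_pos r ⟨le_of_lt h1, h2⟩
      have hu : HasDerivAt (fun r => phi r E A * (1-r))
          (phid r E A * (1-r) + phi r E A * (-1)) r :=
        (phi_hasDerivAt r E A).mul ((hasDerivAt_id r).const_sub 1)
      have hv : HasDerivAt (fun r => r * (1 - phi r E A))
          (1 * (1 - phi r E A) + r * (-phid r E A)) r :=
        (hasDerivAt_id r).mul ((phi_hasDerivAt r E A).const_sub 1)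
      exact ((hu.div hv (ne_of_gt hd)).differentiableAt).differentiableWithinAt
    · rw [interior_Ico]
      intro r hr
      rcases hr with ⟨h1, h2⟩
      have hd := hden_pos r ⟨le_of_lt h1, h2⟩
      have hu : HasDerivAt (fun r => phi r E A * (1-r))
          (phid r E A * (1-r) + phi r E A * (-1)) r :=
        (phi_hasDerivAt r E A).mul ((hasDerivAt_id r).const_sub 1)
      have hv : HasDerivAt (fun r => r * (1 - phi r E A))
          (1 * (1 - phi r E A) + r * (-phid r E A)) r :=
        (hasDerivAt_id r).mul ((phi_hasDerivAt r E A).const_sub 1)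
      have hΨ' := hu.div hv (ne_of_gt hd)
      rw [show deriv Ψ r = _ from hΨ'.deriv]
      have hDI := key_DI E A hA r (by linarith) (le_of_lt h2)
      have hnum : (phid r E A * (1-r) + phi r E A * (-1)) * (r * (1 - phi r E A))
          - phi r E A * (1-r) * (1 * (1 - phi r E A) + r * (-phid r E A))
          = r * (1-r) * phid r E A - phi r E A * (1 - phi r E A) := by ring
      rw [hnum]
      apply div_nonneg (by linarith) (sq_nonneg _)
  have h12 : Ψ (1/2) = 1 := by
    rw [hΨ]; simp only [hhalf]; norm_num
  have hle : Ψ (1/2) ≤ Ψ p :=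
    hmono ⟨le_refl _, by norm_num⟩ ⟨hp12, hplt⟩ hp12
  rw [h12] at hle
  have hd := hden_pos p ⟨hp12, hplt⟩
  rw [hΨ] at hle
  have := (one_le_div hd).1 hle
  nlinarith

variable {k : ℕ}

/-- the ±1 vector attached to a set `S` -/
def chi (S : Finset (Fin k)) : Fin k → ℤ := fun i => if i ∈ S then 1 else -1

lemma chi_val (S : Finset (Fin k)) : ∀ i, chi S i = 1 ∨ chi S i = -1 := by
  intro i; unfold chi; split <;> simp

lemma chi_mono {S T : Finset (Fin k)} (h : S ⊆ T) : chi S ≤ chi T := by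
  intro i
  unfold chi
  by_cases hS : i ∈ S
  · simp [hS, h hS]
  · by_cases hT : i ∈ T <;> simp [hS, hT]
  
lemma chi_compl (S : Finset (Fin k)) : chi Sᶜ = fun i => -(chi S i) := by
  funext i
  unfold chi
  by_cases h : i ∈ S <;> simp [h]

lemma chi_inj {S T : Finset (Fin k)} (h : chi S = chi T) : S = T := by
  ext i
  have := congrFun h i
  unfold chi at this
  by_cases hS : i ∈ S <;> by_cases hT : i ∈ T <;> simp [hS, hT] at this ⊢ <;> omega

section withf
variable (f : (Fin k → ℤ) → ℤ)
    (hfval : ∀ x, (∀ i, x i = 1 ∨ x i = -1) → f x = 1 ∨ f x = -1)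
    (hmono : Monotone f)
    (hodd : ∀ x, f (fun i => -(x i)) = -f x)
/-- the family of sign-vectors on which f is 1 -/
def Af : Finset (Finset (Fin k)) := Finset.univ.filter (fun S => f (chi S) = 1)

lemma mem_Af {S : Finset (Fin k)} : S ∈ Af f ↔ f (chi S) = 1 := by
  unfold Af; simp

include hfval hmono hodd

lemma f_top : f (chi (Finset.univ : Finset (Fin k))) = 1 := by
  have h1 : chi (∅ : Finset (Fin k)) = fun i => -(chi Finset.univ i) := by
    rw [← chi_compl]; simp
  have h2 : f (chi (∅ : Finset (Fin k))) = - f (chi Finset.univ) := by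
    rw [h1, hodd]
  have h3 := hmono (chi_mono (Finset.empty_subset (Finset.univ : Finset (Fin k))))
  rw [h2] at h3
  rcases hfval (chi (Finset.univ : Finset (Fin k))) (chi_val _) with h | h <;> omega

lemma Af_UC : UC Finset.univ (Af f) := by
  constructor
  · intro S _; exact Finset.subset_univ S
  · intro S hS i _
    rw [mem_Af] at hS ⊢
    have h := hmono (chi_mono (Finset.subset_insert i S))
    rcases hfval (chi (insert i S)) (chi_val _) with h1 | h1 <;> omega

lemma Af_compl {S : Finset (Fin k)} : S ∈ Af f ↔ Sᶜ ∉ Af f := by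
  rw [mem_Af, mem_Af]
  have : f (chi Sᶜ) = - f (chi S) := by rw [chi_compl, hodd]
  rcases hfval (chi S) (chi_val _) with h | h <;> rcases hfval (chi Sᶜ) (chi_val _) with h2 | h2 <;>
    simp [h, h2] at this ⊢ <;> omega

lemma Af_bot : ∅ ∉ Af f := by
  have h := (Af_compl f hfval hmono hodd (S := (Finset.univ : Finset (Fin k)))).1
  rw [Finset.compl_univ] at h
  exact h ((mem_Af f).2 (f_top f hfval hmono hodd))

lemma Af_card : (Af f).card * 2 = 2 ^ k := by
  classical
  have hsplit : (Af f).card + (Finset.univ.filter (fun S => ¬ (f (chi S) = 1))).card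
      = (Finset.univ : Finset (Finset (Fin k))).card := by
    exact Finset.card_filter_add_card_filter_not _
  have hbij : (Af f).card = (Finset.univ.filter (fun S => ¬ (f (chi S) = 1))).card := by
    refine Finset.card_bij' (fun S _ => Sᶜ) (fun S _ => Sᶜ) ?hi ?hj ?li ?ri
    case hi =>
      intro S hS
      simp only [Finset.mem_filter, Finset.mem_univ, true_and]
      intro hc
      exact ((Af_compl f hfval hmono hodd).1 hS) ((mem_Af f).2 hc)
    case hj =>
      intro S hS
      simp only [Finset.mem_filter, Finset.mem_univ, true_and] at hS
      show Sᶜ ∈ Af f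
      rw [mem_Af]
      have h2 : f (chi Sᶜ) = - f (chi S) := by rw [chi_compl, hodd]
      rcases hfval (chi S) (chi_val _) with h1 | h1
      · exact absurd h1 hS
      · omega
    case li => intro S _; simp
    case ri => intro S _; simp
  have huniv : (Finset.univ : Finset (Finset (Fin k))).card = 2 ^ k := by
    rw [Finset.card_univ, Fintype.card_finset, Fintype.card_fin]
  omega

lemma Af_half : phi (1/2) Finset.univ (Af f) = 1/2 := by
  have hterm : ∀ S ∈ Af f, W (1/2 : ℝ) (Finset.univ : Finset (Fin k)) S = (1/2)^k := by
    intro S _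
    unfold W
    norm_num
    rw [← pow_add]
    congr 1
    have h1 : S.card ≤ k := by
      have := Finset.card_le_card (Finset.subset_univ S)
      simpa using this
    have h2 : (Finset.univ : Finset (Fin k)).card = k := by simp
    omega
  unfold phi
  rw [Finset.sum_congr rfl hterm, Finset.sum_const, nsmul_eq_mul]
  have hc := Af_card f hfval hmono hodd
  have : ((Af f).card : ℝ) = 2^k / 2 := by
    have : ((Af f).card * 2 : ℕ) = (2:ℕ)^k := hc
    have h := congrArg (fun n : ℕ => (n : ℝ)) this
    push_cast at h
    linarith
  rw [this]
  have h2k : (2:ℝ)^k ≠ 0 := by positivity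
  field_simp
  rw [← mul_pow]; norm_num

theorem f_phi_ge (p : ℝ) (hp : 1/2 ≤ p) (hp1 : p ≤ 1) : p ≤ phi p Finset.univ (Af f) :=
  phi_ge_p _ _ (Af_UC f hfval hmono hodd) (Af_half f hfval hmono hodd)
    (Af_bot f hfval hmono hodd) ((mem_Af f).2 (f_top f hfval hmono hodd)) p hp hp1

end withf


end Stmt12

open Stmt12 in
theorem stmt_12 {Ω : Type*} [MeasurableSpace Ω] (μ : Measure Ω) [IsProbabilityMeasure μ]
    (k : ℕ) (f : (Fin k → ℤ) → ℤ)
    (hfval : ∀ x, (∀ i, x i = 1 ∨ x i = -1) → f x = 1 ∨ f x = -1)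
    (hmono : Monotone f)
    (hodd : ∀ x, f (fun i => -(x i)) = -f x)
    (X : Fin k → Ω → ℤ) (hXmeas : ∀ i, Measurable (X i))
    (hXval : ∀ i ω, X i ω = 1 ∨ X i ω = -1)
    (hindep : iIndepFun X μ)
    (p : ℝ) (hp : 1 / 2 < p)
    (hpX : ∀ i, μ {ω | X i ω = 1} = ENNReal.ofReal p) :
    ENNReal.ofReal p ≤ μ {ω | f (fun i => X i ω) = 1} := by
  classical
  -- k = 0 is degenerate (hypotheses contradictory)
  rcases Nat.eq_zero_or_pos k with rfl | hk
  · exfalso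
    set x : Fin 0 → ℤ := fun _ => 1 with hx
    have hxx : (fun i => -(x i)) = x := by funext i; exact i.elim0
    have h1 := hodd x
    rw [hxx] at h1
    rcases hfval x (fun i => i.elim0) with h | h <;> omega
  -- p ≤ 1
  have hp1 : p ≤ 1 := by
    have h := hpX ⟨0, hk⟩
    have hle : μ {ω | X ⟨0, hk⟩ ω = 1} ≤ 1 := prob_le_one
    rw [h] at hle
    exact ENNReal.ofReal_le_one.1 hle
  have hp0 : (0:ℝ) ≤ p := by linarith
  have hq0 : (0:ℝ) ≤ 1 - p := by linarith
  -- events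
  set Ev : Finset (Fin k) → Set Ω := fun S => ⋂ i, X i ⁻¹' {chi S i} with hEv
  have hEvmeas : ∀ S, MeasurableSet (Ev S) :=
    fun S => MeasurableSet.iInter (fun i => hXmeas i (measurableSet_singleton _))
  have hmemEv : ∀ S ω, ω ∈ Ev S ↔ ∀ i, X i ω = chi S i := by
    intro S ω; simp [hEv, Set.mem_iInter]
  -- measure of a single X_i event
  have hXi1 : ∀ i, μ (X i ⁻¹' {(1:ℤ)}) = ENNReal.ofReal p := fun i => hpX i
  have hXim1 : ∀ i, μ (X i ⁻¹' {(-1:ℤ)}) = ENNReal.ofReal (1-p) := by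
    intro i
    have hset : X i ⁻¹' {(-1:ℤ)} = (X i ⁻¹' {(1:ℤ)})ᶜ := by
      ext ω
      simp only [Set.mem_preimage, Set.mem_singleton_iff, Set.mem_compl_iff]
      constructor
      · intro h h1; rw [h1] at h; omega
      · intro h; rcases hXval i ω with h1 | h1
        · exact absurd h1 h
        · exact h1
    rw [hset, measure_compl (hXmeas i (measurableSet_singleton _)) (measure_ne_top μ _), hXi1 i]
    rw [ENNReal.ofReal_sub 1 hp0, ENNReal.ofReal_one, measure_univ]
  -- measure of each atom
  have hEvμ : ∀ S : Finset (Fin k), μ (Ev S) = ENNReal.ofReal (W p Finset.univ S) := by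
    intro S
    have hind := (iIndepFun_iff_measure_inter_preimage_eq_mul.1 hindep) Finset.univ
      (sets := fun i => {chi S i}) (fun i _ => measurableSet_singleton _)
    have hEq : Ev S = ⋂ i ∈ Finset.univ, X i ⁻¹' {chi S i} := by
      rw [hEv]; simp
    rw [hEq, hind]
    have hfac : ∀ i : Fin k, μ (X i ⁻¹' {chi S i})
        = ENNReal.ofReal (if i ∈ S then p else 1-p) := by
      intro i
      by_cases h : i ∈ S <;> simp only [chi, h, if_true, if_false] <;> simp [hXi1 i, hXim1 i, h]
    rw [Finset.prod_congr rfl (fun i _ => hfac i)]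
    rw [← ENNReal.ofReal_prod_of_nonneg (fun i _ => by split <;> linarith)]
    congr 1
    rw [← Finset.prod_mul_prod_compl S (fun i => if i ∈ S then p else 1-p)]
    have h1 : ∏ i ∈ S, (if i ∈ S then p else 1-p) = p ^ S.card := by
      have e1 : (∏ i ∈ S, (if i ∈ S then p else 1-p)) = ∏ _i ∈ S, p :=
        Finset.prod_congr rfl (fun i hi => if_pos hi)
      rw [e1, Finset.prod_const]
    have h2 : ∏ i ∈ Sᶜ, (if i ∈ S then p else 1-p) = (1-p) ^ (k - S.card) := by
      have e2 : (∏ i ∈ Sᶜ, (if i ∈ S then p else 1-p)) = ∏ _i ∈ Sᶜ, (1-p) :=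
        Finset.prod_congr rfl (fun i hi => if_neg (Finset.mem_compl.1 hi))
      rw [e2, Finset.prod_const, Finset.card_compl, Fintype.card_fin]
    rw [h1, h2]
    unfold W
    rw [Finset.card_univ, Fintype.card_fin]
  -- the target event is the union of atoms over Af
  have hTarget : {ω | f (fun i => X i ω) = 1} = ⋃ S ∈ Af f, Ev S := by
    ext ω
    simp only [Set.mem_setOf_eq, Set.mem_iUnion]
    constructor
    · intro hf
      set S := Finset.univ.filter (fun i => X i ω = 1) with hS
      have hXS : ∀ i, X i ω = chi S i := by
        intro i
        rcases hXval i ω with h | h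
        · rw [h]
          have : i ∈ S := by rw [hS]; simp [h]
          simp [chi, this]
        · rw [h]
          have : i ∉ S := by rw [hS]; simp; omega
          simp [chi, this]
      have hfS : f (chi S) = 1 := by
        have : (fun i => X i ω) = chi S := funext hXS
        rw [← this]; exact hf
      exact ⟨S, (mem_Af f).2 hfS, (hmemEv S ω).2 hXS⟩
    · rintro ⟨S, hSA, hω⟩
      have hXS := (hmemEv S ω).1 hω
      have : (fun i => X i ω) = chi S := funext hXS
      rw [this]
      exact (mem_Af f).1 hSA
  -- disjointness
  have hdisj : (↑(Af f) : Set (Finset (Fin k))).PairwiseDisjoint Ev := by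
    intro S _ T _ hST
    apply Set.disjoint_left.2
    intro ω hS hT
    apply hST
    apply chi_inj (S := S) (T := T)
    funext i
    rw [← (hmemEv S ω).1 hS i, ← (hmemEv T ω).1 hT i]
  rw [hTarget, measure_biUnion_finset hdisj (fun S _ => hEvmeas S)]
  have : ∑ S ∈ Af f, μ (Ev S) = ENNReal.ofReal (phi p Finset.univ (Af f)) := by
    rw [Finset.sum_congr rfl (fun S _ => hEvμ S)]
    rw [← ENNReal.ofReal_sum_of_nonneg]
    · rfl
    · intro S _
      exact mul_nonneg (pow_nonneg hp0 _) (pow_nonneg hq0 _)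
  rw [this]
  exact ENNReal.ofReal_le_ofReal (f_phi_ge f hfval hmono hodd p (le_of_lt hp) hp1)
end

section
/- Let S be uniform on {-1,+1}, and conditioned on S let initial opinions A^i_0 be i.i.d. with P(A^i_0 = S) = p > 1/2. In synchronous majority dynamics on a locally finite graph with odd degrees, for every vertex i and time t, P(A^i_t = S) ≥ p. -/
open MeasureTheory ProbabilityTheory Finset

namespace Stmt13

/-! ### Part I: expectation over i.i.d. biased bits, recursively -/

noncomputable def ind {n : ℕ} (f : (Fin n → Bool) → Bool) : (Fin n → Bool) → ℝ :=
  fun x => if f x then 1 else 0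

noncomputable def Ex (p : ℝ) : ∀ n, ((Fin n → Bool) → ℝ) → ℝ
  | 0, F => F (fun i => i.elim0)
  | n+1, F => (1-p) * Ex p n (fun x => F (Fin.cons false x))
      + p * Ex p n (fun x => F (Fin.cons true x))

noncomputable def Exd (p : ℝ) : ∀ n, ((Fin n → Bool) → ℝ) → ℝ
  | 0, _ => 0
  | n+1, F => (Ex p n (fun x => F (Fin.cons true x)) - Ex p n (fun x => F (Fin.cons false x)))
      + ((1-p) * Exd p n (fun x => F (Fin.cons false x))
        + p * Exd p n (fun x => F (Fin.cons true x)))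

lemma Ex_zero' (p : ℝ) (F : (Fin 0 → Bool) → ℝ) : Ex p 0 F = F (fun i => i.elim0) := rfl

lemma Ex_succ (p : ℝ) {n : ℕ} (F : (Fin (n+1) → Bool) → ℝ) :
    Ex p (n+1) F = (1-p) * Ex p n (fun x => F (Fin.cons false x))
      + p * Ex p n (fun x => F (Fin.cons true x)) := rfl

lemma Exd_succ (p : ℝ) {n : ℕ} (F : (Fin (n+1) → Bool) → ℝ) :
    Exd p (n+1) F = (Ex p n (fun x => F (Fin.cons true x)) - Ex p n (fun x => F (Fin.cons false x)))
      + ((1-p) * Exd p n (fun x => F (Fin.cons false x))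
        + p * Exd p n (fun x => F (Fin.cons true x))) := rfl

lemma Ex_const (p : ℝ) : ∀ (n : ℕ) (c : ℝ), Ex p n (fun _ => c) = c := by
  intro n
  induction n with
  | zero => intro c; rfl
  | succ n ih => intro c; simp only [Ex_succ, ih]; ring

lemma Ex_add (p : ℝ) : ∀ (n : ℕ) (F G : (Fin n → Bool) → ℝ),
    Ex p n (fun x => F x + G x) = Ex p n F + Ex p n G := by
  intro n
  induction n with
  | zero => intro F G; rfl
  | succ n ih => intro F G; simp only [Ex_succ, ih]; ring

lemma Ex_mono (p : ℝ) (hp0 : 0 ≤ p) (hp1 : p ≤ 1) :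
    ∀ (n : ℕ) (F G : (Fin n → Bool) → ℝ), (∀ x, F x ≤ G x) → Ex p n F ≤ Ex p n G := by
  intro n
  induction n with
  | zero => intro F G h; exact h _
  | succ n ih =>
    intro F G h
    simp only [Ex_succ]
    have h1 : 0 ≤ 1 - p := by linarith
    exact add_le_add (mul_le_mul_of_nonneg_left (ih _ _ fun x => h _) h1)
      (mul_le_mul_of_nonneg_left (ih _ _ fun x => h _) hp0)

lemma Ex_nonneg (p : ℝ) (hp0 : 0 ≤ p) (hp1 : p ≤ 1) (n : ℕ) (F : (Fin n → Bool) → ℝ)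
    (hF : ∀ x, 0 ≤ F x) : 0 ≤ Ex p n F := by
  have := Ex_mono p hp0 hp1 n (fun _ => 0) F (fun x => hF x)
  rwa [Ex_const] at this

lemma Ex_le_one (p : ℝ) (hp0 : 0 ≤ p) (hp1 : p ≤ 1) (n : ℕ) (F : (Fin n → Bool) → ℝ)
    (hF : ∀ x, F x ≤ 1) : Ex p n F ≤ 1 := by
  have := Ex_mono p hp0 hp1 n F (fun _ => 1) (fun x => hF x)
  rwa [Ex_const] at this

lemma hasDerivAt_Ex : ∀ (n : ℕ) (F : (Fin n → Bool) → ℝ) (p : ℝ),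
    HasDerivAt (fun q => Ex q n F) (Exd p n F) p := by
  intro n
  induction n with
  | zero =>
    intro F p
    simpa [Ex_zero', Exd] using hasDerivAt_const p (F (fun i => i.elim0))
  | succ n ih =>
    intro F p
    have h0 := ih (fun x => F (Fin.cons false x)) p
    have h1 := ih (fun x => F (Fin.cons true x)) p
    have hq : HasDerivAt (fun q : ℝ => 1 - q) (-1) p := by
      exact ((hasDerivAt_const p (1:ℝ)).sub (hasDerivAt_id' p)).congr_deriv (by ring)
    have hid : HasDerivAt (fun q : ℝ => q) (1:ℝ) p := hasDerivAt_id p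
    have := (hq.mul h0).add (hid.mul h1)
    refine this.congr_deriv ?_
    rw [Exd_succ]
    ring

lemma cons_le_cons {n : ℕ} (b b' : Bool) (x y : Fin n → Bool) (hb : b ≤ b') (h : x ≤ y) :
    (Fin.cons b x : Fin (n+1) → Bool) ≤ Fin.cons b' y := by
  intro i
  refine Fin.cases ?_ ?_ i
  · simpa using hb
  · intro j; simpa using h j

lemma ind_mono {n : ℕ} {f : (Fin n → Bool) → Bool} (hf : Monotone f) {x y : Fin n → Bool}
    (h : x ≤ y) : ind f x ≤ ind f y := by
  unfold ind
  have := hf h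
  by_cases hx : f x
  · simp [hx, Bool.le_iff_imp.mp this hx]
  · by_cases hy : f y <;> simp [hx, hy]

lemma ind_nonneg {n : ℕ} (f : (Fin n → Bool) → Bool) (x) : 0 ≤ ind f x := by
  unfold ind; split <;> norm_num

lemma ind_le_one {n : ℕ} (f : (Fin n → Bool) → Bool) (x) : ind f x ≤ 1 := by
  unfold ind; split <;> norm_num

/-- Key differential inequality. -/
lemma key_ineq : ∀ (n : ℕ) (f : (Fin n → Bool) → Bool), Monotone f →
    ∀ (p : ℝ), 0 ≤ p → p ≤ 1 →
    Ex p n (ind f) * (1 - Ex p n (ind f)) ≤ p * (1-p) * Exd p n (ind f) := by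
  intro n
  induction n with
  | zero =>
    intro f _ p hp0 hp1
    have : Ex p 0 (ind f) = ind f (fun i => i.elim0) := rfl
    rw [this]
    unfold ind Exd
    split <;> norm_num
  | succ n ih =>
    intro f hf p hp0 hp1
    rw [Ex_succ, Exd_succ]
    simp only [show ∀ (b:Bool), (fun x => ind f (Fin.cons b x))
        = ind (fun x => f (Fin.cons b x)) from fun b => rfl]
    have hmono0 : Monotone (fun x => f (Fin.cons false x)) :=
      fun x y h => hf (cons_le_cons _ _ _ _ le_rfl h)
    have hmono1 : Monotone (fun x => f (Fin.cons true x)) :=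
      fun x y h => hf (cons_le_cons _ _ _ _ le_rfl h)
    set m0 := Ex p n (ind (fun x => f (Fin.cons false x))) with hm0
    set m1 := Ex p n (ind (fun x => f (Fin.cons true x))) with hm1
    set d0 := Exd p n (ind (fun x => f (Fin.cons false x))) with hd0
    set d1 := Exd p n (ind (fun x => f (Fin.cons true x))) with hd1
    have hq0 : 0 ≤ 1 - p := by linarith
    have h01 : m0 ≤ m1 := by
      apply Ex_mono p hp0 hp1
      intro x
      exact ind_mono hf (cons_le_cons _ _ _ _ (by simp) le_rfl)
    have hm0nn : 0 ≤ m0 := Ex_nonneg p hp0 hp1 n _ (ind_nonneg _)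
    have hm1le : m1 ≤ 1 := Ex_le_one p hp0 hp1 n _ (ind_le_one _)
    have I0 : m0 * (1 - m0) ≤ p * (1-p) * d0 := ih _ hmono0 p hp0 hp1
    have I1 : m1 * (1 - m1) ≤ p * (1-p) * d1 := ih _ hmono1 p hp0 hp1
    nlinarith [mul_le_mul_of_nonneg_left I0 hq0, mul_le_mul_of_nonneg_left I1 hp0,
      mul_nonneg (mul_nonneg hp0 hq0) (mul_nonneg (sub_nonneg.2 h01)
        (sub_nonneg.2 (by linarith : m1 - m0 ≤ 1)))]

lemma not_cons (n : ℕ) (b : Bool) (x : Fin n → Bool) :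
    (fun i => ! ((Fin.cons b x : Fin (n+1) → Bool) i)) = (Fin.cons (!b) (fun j => !(x j)) : Fin (n+1) → Bool) := by
  funext i
  refine Fin.cases ?_ ?_ i
  · simp
  · intro j; simp

lemma Ex_flip : ∀ (n : ℕ) (F : (Fin n → Bool) → ℝ) (p : ℝ),
    Ex p n (fun x => F (fun i => !(x i))) = Ex (1-p) n F := by
  intro n
  induction n with
  | zero =>
    intro F p
    have : (fun i : Fin 0 => !((fun j : Fin 0 => j.elim0) i)) = (fun i : Fin 0 => i.elim0) := by
      funext i; exact i.elim0
    simp only [Ex, this]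
  | succ n ih =>
    intro F p
    rw [Ex_succ, Ex_succ]
    have e0 : (fun x => (fun y => F (fun i => !(y i))) (Fin.cons false x))
        = (fun x => (fun y => F (Fin.cons true y)) (fun i => !(x i))) := by
      funext x
      beta_reduce
      rw [show (fun i => !((Fin.cons false x : Fin (n+1) → Bool) i)) = _ from not_cons n false x]
      simp
    have e1 : (fun x => (fun y => F (fun i => !(y i))) (Fin.cons true x))
        = (fun x => (fun y => F (Fin.cons false y)) (fun i => !(x i))) := by
      funext x
      beta_reduce
      rw [show (fun i => !((Fin.cons true x : Fin (n+1) → Bool) i)) = _ from not_cons n true x]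
      simp
    rw [e0, e1, ih (fun y => F (Fin.cons true y)) p, ih (fun y => F (Fin.cons false y)) p]
    ring

lemma Ex_half {n : ℕ} (f : (Fin n → Bool) → Bool)
    (hodd : ∀ x, f (fun i => !(x i)) = !(f x)) :
    Ex (1/2) n (ind f) = 1/2 := by
  have h1 : Ex (1/2) n (fun x => ind f x + ind f (fun i => !(x i))) = 1 := by
    have : (fun x : Fin n → Bool => ind f x + ind f (fun i => !(x i))) = fun _ => (1:ℝ) := by
      funext x
      unfold ind
      rw [hodd x]
      by_cases h : f x <;> simp [h]
    rw [this, Ex_const]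
  rw [Ex_add] at h1
  have h2 : Ex (1/2) n (fun x => ind f (fun i => !(x i))) = Ex (1/2) n (ind f) := by
    have := Ex_flip n (ind f) (1/2)
    rw [this]
    norm_num
  rw [h2] at h1
  linarith

/-- The core lemma: a monotone odd Boolean function of i.i.d. `p`-biased
bits is `true` with probability at least `p`, for `1/2 ≤ p < 1`. -/
theorem core {n : ℕ} (f : (Fin n → Bool) → Bool) (hf : Monotone f)
    (hodd : ∀ x, f (fun i => !(x i)) = !(f x))
    {p : ℝ} (hp : 1/2 ≤ p) (hp1 : p < 1) : p ≤ Ex p n (ind f) := by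
  set m : ℝ → ℝ := fun q => Ex q n (ind f) with hm
  have hdiff : Differentiable ℝ m := fun q => (hasDerivAt_Ex n (ind f) q).differentiableAt
  have hderiv : ∀ q, deriv m q = Exd q n (ind f) := fun q => (hasDerivAt_Ex n (ind f) q).deriv
  have hm01 : ∀ q, 0 ≤ q → q ≤ 1 → 0 ≤ m q ∧ m q ≤ 1 := fun q h1 h2 =>
    ⟨Ex_nonneg q h1 h2 n _ (ind_nonneg f), Ex_le_one q h1 h2 n _ (ind_le_one f)⟩
  have hkey : ∀ q, 0 ≤ q → q ≤ 1 → m q * (1 - m q) ≤ q * (1-q) * Exd q n (ind f) :=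
    fun q h1 h2 => key_ineq n f hf q h1 h2
  have hderiv_nonneg : ∀ q, 0 < q → q < 1 → 0 ≤ deriv m q := by
    intro q h1 h2
    rw [hderiv]
    have hk := hkey q h1.le h2.le
    have hmq := hm01 q h1.le h2.le
    have h3 : 0 ≤ m q * (1 - m q) := mul_nonneg hmq.1 (by linarith [hmq.2])
    have h4 : (0:ℝ) < q * (1-q) := mul_pos h1 (by linarith)
    exact (mul_nonneg_iff_of_pos_left h4).mp (h3.trans hk)
  have hmono : MonotoneOn m (Set.Icc (1/2 : ℝ) p) := by
    apply monotoneOn_of_deriv_nonneg (convex_Icc _ _) hdiff.continuous.continuousOn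
      hdiff.differentiableOn
    intro q hq
    rw [interior_Icc] at hq
    exact hderiv_nonneg q (by linarith [hq.1]) (by linarith [hq.2])
  have hhalf : m (1/2) = 1/2 := Ex_half f hodd
  by_cases hmp1 : 1 ≤ m p
  · linarith
  push_neg at hmp1
  have hlt1 : ∀ q ∈ Set.Icc (1/2:ℝ) p, m q < 1 := by
    intro q hq
    exact lt_of_le_of_lt (hmono hq (Set.right_mem_Icc.2 (by linarith)) hq.2) hmp1
  set r : ℝ → ℝ := fun q => (m q * (1 - q)) / (q * (1 - m q)) with hr
  have hvpos : ∀ q ∈ Set.Icc (1/2:ℝ) p, 0 < q * (1 - m q) := by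
    intro q hq
    have := hlt1 q hq
    have : 0 < 1 - m q := by linarith
    have hq0 : (0:ℝ) < q := by linarith [hq.1]
    positivity
  have hrd : ∀ q ∈ Set.Ioo (1/2:ℝ) p, HasDerivAt r
      (((Exd q n (ind f) * (1 - q) + m q * (-1)) * (q * (1 - m q))
        - (m q * (1 - q)) * ((1:ℝ) * (1 - m q) + q * (-(Exd q n (ind f))))) / (q * (1 - m q))^2) q := by
    intro q hq
    have hu : HasDerivAt (fun q => m q * (1 - q)) (Exd q n (ind f) * (1 - q) + m q * (-1)) q :=
      (hasDerivAt_Ex n (ind f) q).mul (((hasDerivAt_const q (1:ℝ)).sub (hasDerivAt_id' q)).congr_deriv (by ring))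
    have hv : HasDerivAt (fun q => q * (1 - m q)) ((1:ℝ) * (1 - m q) + q * (-(Exd q n (ind f)))) q :=
      (hasDerivAt_id q).mul (((hasDerivAt_const q (1:ℝ)).sub (hasDerivAt_Ex n (ind f) q)).congr_deriv (by ring))
    have hne : q * (1 - m q) ≠ 0 := (hvpos q (Set.mem_Icc_of_Ioo hq)).ne'
    exact hu.div hv hne
  have hrmono : MonotoneOn r (Set.Icc (1/2:ℝ) p) := by
    apply monotoneOn_of_deriv_nonneg (convex_Icc _ _)
    · apply ContinuousOn.div
      · exact (hdiff.continuous.mul (continuous_const.sub continuous_id)).continuousOn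
      · exact (continuous_id.mul (continuous_const.sub hdiff.continuous)).continuousOn
      · intro q hq; exact (hvpos q hq).ne'
    · intro q hq
      rw [interior_Icc] at hq
      exact (hrd q hq).differentiableAt.differentiableWithinAt
    · intro q hq
      rw [interior_Icc] at hq
      rw [(hrd q hq).deriv]
      apply div_nonneg _ (sq_nonneg _)
      have hq1 : (0:ℝ) < q := by linarith [hq.1]
      have hq2 : q < 1 := by linarith [hq.2]
      have hk := hkey q hq1.le hq2.le
      nlinarith [hk]
  have h12mem : (1/2:ℝ) ∈ Set.Icc (1/2:ℝ) p := Set.left_mem_Icc.2 (by linarith)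
  have hpmem : p ∈ Set.Icc (1/2:ℝ) p := Set.right_mem_Icc.2 (by linarith)
  have hr12 : r (1/2) = 1 := by
    rw [hr]
    simp only [hhalf]
    norm_num
  have hge := hrmono h12mem hpmem (by linarith)
  rw [hr12] at hge
  have hvp := hvpos p hpmem
  have huv : p * (1 - m p) ≤ m p * (1 - p) := by
    have := (one_le_div hvp).mp hge
    linarith
  nlinarith [huv]

lemma Ex_sum (p : ℝ) : ∀ (n : ℕ) (F : (Fin n → Bool) → ℝ),
    Ex p n F = ∑ x : Fin n → Bool, (∏ i, (if x i then p else 1-p)) * F x := by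
  intro n
  induction n with
  | zero =>
    intro F
    rw [Ex_zero']
    rw [Fintype.sum_eq_single (fun i : Fin 0 => i.elim0)]
    · simp
    · intro x hx
      exact absurd (funext fun i => i.elim0) hx
  | succ n ih =>
    intro F
    rw [Ex_succ, ih, ih]
    rw [← (Fin.consEquiv (fun _ : Fin (n+1) => Bool)).sum_comp
      (fun x : Fin (n+1) → Bool => (∏ i, (if x i then p else 1-p)) * F x)]
    rw [Fintype.sum_prod_type]
    simp only [Fintype.sum_bool]
    rw [Finset.mul_sum, Finset.mul_sum, ← Finset.sum_add_distrib, ← Finset.sum_add_distrib]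
    apply Finset.sum_congr rfl
    intro x _
    simp only [Fin.prod_univ_succ, Fin.consEquiv, Equiv.coe_fn_mk, Fin.cons_zero, Fin.cons_succ,
      if_true, if_false]
    norm_num
    ring

/-! ### Part II: majority dynamics as a local monotone odd function -/

variable {V : Type*} (G : SimpleGraph V) [∀ v : V, Fintype (G.neighborSet v)]

def Gfun : ℕ → V → (V → ℤ) → ℤ
  | 0, v, b => b v
  | t+1, v, b => if 0 < ∑ j ∈ G.neighborFinset v, Gfun t j b then 1 else -1

noncomputable def ball : ℕ → V → Finset V
  | 0, v => {v}
  | t+1, v => letI := Classical.decEq V; (G.neighborFinset v).biUnion (ball t)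

lemma Gfun_zero (v : V) (b : V → ℤ) : Gfun G 0 v b = b v := rfl

lemma Gfun_succ (t : ℕ) (v : V) (b : V → ℤ) :
    Gfun G (t+1) v b = if 0 < ∑ j ∈ G.neighborFinset v, Gfun G t j b then 1 else -1 := rfl

lemma Gfun_val : ∀ (t : ℕ) (v : V) (b : V → ℤ), (∀ w, b w = 1 ∨ b w = -1) →
    Gfun G t v b = 1 ∨ Gfun G t v b = -1 := by
  intro t
  induction t with
  | zero => intro v b hb; exact hb v
  | succ t _ =>
    intro v b _
    rw [Gfun_succ]
    split <;> simp

lemma Gfun_congr : ∀ (t : ℕ) (v : V) (b b' : V → ℤ), (∀ w ∈ ball G t v, b w = b' w) →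
    Gfun G t v b = Gfun G t v b' := by
  intro t
  induction t with
  | zero =>
    intro v b b' h
    exact h v (by simp [ball])
  | succ t ih =>
    intro v b b' h
    rw [Gfun_succ, Gfun_succ]
    have : ∑ j ∈ G.neighborFinset v, Gfun G t j b = ∑ j ∈ G.neighborFinset v, Gfun G t j b' := by
      apply Finset.sum_congr rfl
      intro j hj
      apply ih
      intro w hw
      apply h
      simp only [ball]
      classical
      exact Finset.mem_biUnion.2 ⟨j, hj, by convert hw⟩
    rw [this]

lemma Gfun_mono : ∀ (t : ℕ) (v : V) (b b' : V → ℤ), (∀ w, b w ≤ b' w) →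
    Gfun G t v b ≤ Gfun G t v b' := by
  intro t
  induction t with
  | zero => intro v b b' h; exact h v
  | succ t ih =>
    intro v b b' h
    rw [Gfun_succ, Gfun_succ]
    have hs : ∑ j ∈ G.neighborFinset v, Gfun G t j b ≤ ∑ j ∈ G.neighborFinset v, Gfun G t j b' :=
      Finset.sum_le_sum fun j _ => ih j b b' h
    split
    · rw [if_pos (by omega)]
    · split <;> omega

lemma sum_pm_ne_zero {s : Finset V} (x : V → ℤ) (hx : ∀ j ∈ s, x j = 1 ∨ x j = -1)
    (hcard : Odd s.card) : (∑ j ∈ s, x j) ≠ 0 := by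
  intro h0
  have : ((∑ j ∈ s, x j : ℤ) : ZMod 2) = 0 := by rw [h0]; simp
  rw [Int.cast_sum] at this
  have heq : ∀ j ∈ s, ((x j : ℤ) : ZMod 2) = 1 := by
    intro j hj
    rcases hx j hj with h | h <;> rw [h] <;> decide
  rw [Finset.sum_congr rfl heq, Finset.sum_const, nsmul_eq_mul, mul_one] at this
  rw [Nat.odd_iff] at hcard
  rw [show ((s.card : ZMod 2)) = ((s.card % 2 : ℕ) : ZMod 2) from (ZMod.natCast_mod _ _).symm,
    hcard] at this
  exact one_ne_zero this

lemma Gfun_odd (hodd : ∀ v, Odd (G.degree v)) :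
    ∀ (t : ℕ) (v : V) (b : V → ℤ), (∀ w, b w = 1 ∨ b w = -1) →
    Gfun G t v (fun w => - b w) = - Gfun G t v b := by
  intro t
  induction t with
  | zero => intro v b _; rfl
  | succ t ih =>
    intro v b hb
    rw [Gfun_succ, Gfun_succ]
    have hs : ∑ j ∈ G.neighborFinset v, Gfun G t j (fun w => - b w)
        = - ∑ j ∈ G.neighborFinset v, Gfun G t j b := by
      rw [← Finset.sum_neg_distrib]
      exact Finset.sum_congr rfl fun j _ => ih j b hb
    rw [hs]
    have hne : (∑ j ∈ G.neighborFinset v, Gfun G t j b) ≠ 0 := by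
      apply sum_pm_ne_zero
      · intro j _; exact Gfun_val G t j b hb
      · rw [SimpleGraph.card_neighborFinset_eq_degree]; exact hodd v
    rcases lt_or_gt_of_ne hne with h | h
    · rw [if_pos (by omega), if_neg (by omega)]; ring
    · rw [if_neg (by omega), if_pos h]

lemma Gfun_mul_sign (hodd : ∀ v, Odd (G.degree v)) (t : ℕ) (v : V) (b : V → ℤ) (s : ℤ)
    (hb : ∀ w, b w = 1 ∨ b w = -1) (hs : s = 1 ∨ s = -1) :
    Gfun G t v (fun w => b w * s) = Gfun G t v b * s := by
  rcases hs with h | h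
  · simp [h]
  · subst h
    have : (fun w => b w * (-1)) = fun w => - b w := by funext w; ring
    rw [this, Gfun_odd G hodd t v b hb]
    ring

end Stmt13

open Stmt13

/-- Let `S` be uniform on `{-1,+1}` and, conditioned on `S`, let the initial
opinions be i.i.d. with `P(A^i_0 = S) = p > 1/2` (formalized: the agreement indicators
`A^i_0·S` together with `S` form an independent family, with `P(A^i_0 = S) = p`). Then in
synchronous majority dynamics on a locally finite graph with odd degrees,
`P(A^i_t = S) ≥ p` for every vertex `i` and time `t`. -/
theorem stmt_13 {V : Type*} (G : SimpleGraph V) [∀ v : V, Fintype (G.neighborSet v)]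
    (hodd : ∀ v, Odd (G.degree v))
    {Ω : Type*} [MeasurableSpace Ω] (μ : Measure Ω) [IsProbabilityMeasure μ]
    (S : Ω → ℤ) (hSmeas : Measurable S)
    (hSval : ∀ ω, S ω = 1 ∨ S ω = -1)
    (hSunif : μ {ω | S ω = 1} = 1 / 2)
    (A : ℕ → V → Ω → ℤ)
    (hA0meas : ∀ v, Measurable (A 0 v))
    (hA0val : ∀ v ω, A 0 v ω = 1 ∨ A 0 v ω = -1)
    (p : ℝ) (hp : 1 / 2 < p) (hp1 : p < 1)
    (hindep : iIndepFun
      (fun o : Option V => Option.elim o S (fun v ω => A 0 v ω * S ω)) μ)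
    (hpA : ∀ v, μ {ω | A 0 v ω = S ω} = ENNReal.ofReal p)
    (hdyn : ∀ ω t v, A (t + 1) v ω =
      if 0 < ∑ j ∈ G.neighborFinset v, A t j ω then 1 else -1) :
    ∀ (v : V) (t : ℕ), ENNReal.ofReal p ≤ μ {ω | A t v ω = S ω} := by
  classical
  intro v t
  have hp0 : (0:ℝ) ≤ p := by linarith
  set B : V → Ω → ℤ := fun w ω => A 0 w ω * S ω with hB
  have hBval : ∀ w ω, B w ω = 1 ∨ B w ω = -1 := by
    intro w ω
    rcases hA0val w ω with h | h <;> rcases hSval ω with h' | h' <;> simp [hB, h, h']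
  have hBmeas : ∀ w, Measurable (B w) := fun w => (hA0meas w).mul hSmeas
  have hAG : ∀ t v ω, A t v ω = Gfun G t v (fun j => A 0 j ω) := by
    intro t
    induction t with
    | zero => intro v ω; rw [Gfun_zero]
    | succ t ih =>
      intro v ω
      rw [hdyn ω t v, Gfun_succ]
      have : ∑ j ∈ G.neighborFinset v, A t j ω
          = ∑ j ∈ G.neighborFinset v, Gfun G t j (fun j => A 0 j ω) :=
        Finset.sum_congr rfl fun j _ => ih j ω
      rw [this]
  have hGB : ∀ ω, Gfun G t v (fun j => B j ω) = A t v ω * S ω := by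
    intro ω
    have : (fun j => B j ω) = fun j => (A 0 j ω) * S ω := rfl
    rw [this, Gfun_mul_sign G hodd t v (fun j => A 0 j ω) (S ω) (fun w => hA0val w ω) (hSval ω),
      ← hAG t v ω]
  have hS2 : ∀ ω, S ω * S ω = 1 := by
    intro ω; rcases hSval ω with h'|h' <;> rw [h'] <;> ring
  have hsetE : {ω | A t v ω = S ω} = {ω | Gfun G t v (fun j => B j ω) = 1} := by
    ext ω
    simp only [Set.mem_setOf_eq, hGB ω]
    constructor
    · intro h; rw [h]; exact hS2 ω
    · intro h
      calc A t v ω = A t v ω * (S ω * S ω) := by rw [hS2 ω]; ring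
        _ = S ω := by rw [← mul_assoc, h]; ring
  -- finite ball and local boolean function
  set D : Finset V := ball G t v with hD
  set n : ℕ := D.card with hn
  set e : {x // x ∈ D} ≃ Fin n := D.equivFin with he
  set biz : Bool → ℤ := fun c => if c then 1 else -1 with hbiz
  set z : (Fin n → Bool) → V → ℤ :=
    fun c w => if h : w ∈ D then biz (c (e ⟨w, h⟩)) else 1 with hz
  have hzval : ∀ c w, z c w = 1 ∨ z c w = -1 := by
    intro c w
    by_cases h : w ∈ D
    · by_cases hc : c (e ⟨w, h⟩) <;> simp [hz, hbiz, h, hc]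
    · simp [hz, h]
  set g : (Fin n → Bool) → Bool := fun c => decide (Gfun G t v (z c) = 1) with hg
  have hgiff : ∀ c, g c = true ↔ Gfun G t v (z c) = 1 := by
    intro c; simp only [hg]; exact decide_eq_true_iff
  -- monotone
  have hgmono : Monotone g := by
    intro c c' hcc
    have hzle : ∀ w, z c w ≤ z c' w := by
      intro w
      by_cases h : w ∈ D
      · have himp := Bool.le_iff_imp.mp (hcc (e ⟨w, h⟩))
        by_cases hcw : c (e ⟨w, h⟩)
        · simp [hz, hbiz, h, hcw, himp hcw]
        · by_cases hcw' : c' (e ⟨w, h⟩) <;> simp [hz, hbiz, h, hcw, hcw'] <;> norm_num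
      · simp [hz, h]
    have hle := Gfun_mono G t v (z c) (z c') hzle
    by_cases hgc : g c
    · have h1 : Gfun G t v (z c) = 1 := (hgiff c).mp hgc
      rcases Gfun_val G t v (z c') (hzval c') with h2 | h2
      · simp [hgc, (hgiff c').mpr h2]
      · omega
    · simp [Bool.le_iff_imp, hgc]
  -- odd
  have hgodd : ∀ c, g (fun i => !(c i)) = !(g c) := by
    intro c
    have h1 : Gfun G t v (z (fun i => !(c i))) = Gfun G t v (fun w => - z c w) := by
      apply Gfun_congr
      intro w hw
      rw [← hD] at hw
      by_cases hcw : c (e ⟨w, hw⟩) <;> simp [hz, hbiz, hw, hcw]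
    have h2 : Gfun G t v (fun w => - z c w) = - Gfun G t v (z c) :=
      Gfun_odd G hodd t v (z c) (hzval c)
    rcases Gfun_val G t v (z c) (hzval c) with h3 | h3
    · have : g c = true := (hgiff c).mpr h3
      rw [this]
      have : Gfun G t v (z (fun i => !(c i))) = -1 := by rw [h1, h2, h3]
      simp [hg, this]
    · have hgc : g c = false := by
        rw [hg]; simp only [decide_eq_false_iff_not]; omega
      rw [hgc]
      have : Gfun G t v (z (fun i => !(c i))) = 1 := by rw [h1, h2, h3]; ring
      simp [hg, this]
  -- atoms
  set Atom : (Fin n → Bool) → Set Ω := fun c => {ω | ∀ w ∈ D, B w ω = z c w} with hAtom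
  have hmeasAtom : ∀ c, MeasurableSet (Atom c) := by
    intro c
    have : Atom c = ⋂ w ∈ D, (B w) ⁻¹' {z c w} := by
      ext ω; simp [hAtom, Set.mem_iInter]
    rw [this]
    exact Finset.measurableSet_biInter D fun w _ => (hBmeas w) (measurableSet_singleton _)
  have hunion : {ω | Gfun G t v (fun j => B j ω) = 1}
      = ⋃ c ∈ Finset.univ.filter (fun c : Fin n → Bool => g c), Atom c := by
    ext ω
    simp only [Set.mem_setOf_eq, Set.mem_iUnion, Finset.mem_filter, Finset.mem_univ, true_and]
    constructor
    · intro h1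
      refine ⟨fun i => decide (B (↑(e.symm i)) ω = 1), ?_, ?_⟩
      · rw [hgiff (fun i => decide (B (↑(e.symm i)) ω = 1))]
        have : Gfun G t v (z fun i => decide (B (↑(e.symm i)) ω = 1))
            = Gfun G t v (fun j => B j ω) := by
          apply Gfun_congr
          intro w hw
          rw [← hD] at hw
          have hee : (e.symm (e ⟨w, hw⟩) : V) = w := by rw [Equiv.symm_apply_apply]
          rcases hBval w ω with h | h <;> simp [hz, hbiz, hw, hee, h]
        rw [this, h1]
      · intro w hw
        have hee : (e.symm (e ⟨w, hw⟩) : V) = w := by rw [Equiv.symm_apply_apply]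
        rcases hBval w ω with h | h <;> simp [hz, hbiz, hw, hee, h]
    · rintro ⟨c, hgc, hω⟩
      have : Gfun G t v (fun j => B j ω) = Gfun G t v (z c) := by
        apply Gfun_congr
        intro w hw
        exact hω w (hD ▸ hw)
      rw [this]
      exact (hgiff c).mp hgc
  have hdisj : Set.PairwiseDisjoint
      (↑(Finset.univ.filter (fun c : Fin n → Bool => g c))) Atom := by
    intro c _ c' _ hne
    apply Set.disjoint_left.mpr
    intro ω hωc hωc'
    apply hne
    funext i
    have hw : (↑(e.symm i) : V) ∈ D := (e.symm i).2
    have h1 := hωc _ hw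
    have h2 := hωc' _ hw
    have hsub : (⟨↑(e.symm i), hw⟩ : {x // x ∈ D}) = e.symm i := Subtype.ext rfl
    simp only [hz, hbiz, dif_pos hw, hsub, Equiv.apply_symm_apply] at h1 h2
    have h12 : (if c i = true then (1:ℤ) else -1) = (if c' i = true then 1 else -1) := by
      rw [← h1, ← h2]
    by_cases h3 : c i <;> by_cases h4 : c' i <;> simp [h3, h4] at h12 ⊢
  -- probabilities of bits
  have hB1 : ∀ w, μ (B w ⁻¹' {1}) = ENNReal.ofReal p := by
    intro w
    have hset : B w ⁻¹' {1} = {ω | A 0 w ω = S ω} := by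
      ext ω
      simp only [Set.mem_preimage, Set.mem_singleton_iff, Set.mem_setOf_eq]
      constructor
      · intro h
        rcases hSval ω with hs|hs <;> rcases hA0val w ω with ha|ha <;>
          simp [hB, hs, ha] at h ⊢
      · intro h
        rw [hB]
        simp only
        rw [h]
        exact hS2 ω
    rw [hset, hpA w]
  have hBneg : ∀ w, μ (B w ⁻¹' {-1}) = ENNReal.ofReal (1-p) := by
    intro w
    have hc : B w ⁻¹' {-1} = (B w ⁻¹' {1})ᶜ := by
      ext ω
      rcases hBval w ω with h|h <;> simp [h]
    rw [hc, prob_compl_eq_one_sub ((hBmeas w) (measurableSet_singleton 1)), hB1 w]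
    rw [show (1:ENNReal) = ENNReal.ofReal 1 by simp, ← ENNReal.ofReal_sub 1 hp0]
  -- independence: atom measures factorize
  have hAtomMeas : ∀ c, μ (Atom c) = ∏ w ∈ D, μ (B w ⁻¹' {z c w}) := by
    intro c
    set sets : Option V → Set ℤ :=
      fun o => Option.elim o Set.univ (fun w => if w ∈ D then {z c w} else Set.univ) with hsets
    have hmeas : ∀ o ∈ D.image some, MeasurableSet (sets o) := by
      intro o _
      rcases o with _ | w
      · exact MeasurableSet.univ
      · simp only [hsets, Option.elim]
        split
        · exact measurableSet_singleton _
        · exact MeasurableSet.univ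
    have h2 := hindep.measure_inter_preimage_eq_mul (D.image some) hmeas
    have h1 : Atom c = ⋂ o ∈ D.image some,
        (Option.elim o S (fun v ω => A 0 v ω * S ω)) ⁻¹' sets o := by
      ext ω
      simp only [hAtom, Set.mem_setOf_eq, Set.mem_iInter, Finset.mem_image]
      constructor
      · rintro h o ⟨w, hw, rfl⟩
        simp only [hsets, Option.elim, Set.mem_preimage, if_pos hw, Set.mem_singleton_iff]
        exact h w hw
      · intro h w hw
        have := h (some w) ⟨w, hw, rfl⟩
        simpa [hsets, Option.elim, Set.mem_preimage, if_pos hw, Set.mem_singleton_iff] using this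
    rw [h1, h2]
    rw [Finset.prod_image (fun x _ y _ h => Option.some_injective V h)]
    apply Finset.prod_congr rfl
    intro w hw
    simp only [hsets, Option.elim, if_pos hw]
  -- atom measure as an explicit product over `Fin n`
  have hAtomVal : ∀ c, μ (Atom c)
      = ∏ i : Fin n, (if c i then ENNReal.ofReal p else ENNReal.ofReal (1-p)) := by
    intro c
    rw [hAtomMeas c]
    rw [← Finset.prod_attach D (fun w => μ (B w ⁻¹' {z c w}))]
    rw [← Finset.univ_eq_attach]
    apply Fintype.prod_equiv e
    intro x
    have hx : (x : V) ∈ D := x.2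
    have hxe : (⟨(x:V), hx⟩ : {a // a ∈ D}) = x := Subtype.ext rfl
    by_cases hc : c (e x)
    · have hzc : z c (x : V) = 1 := by simp [hz, hbiz, hx, hxe, hc]
      rw [hzc, hB1]
      simp [hc]
    · have hzc : z c (x : V) = -1 := by simp [hz, hbiz, hx, hxe, hc]
      rw [hzc, hBneg]
      simp [hc]
  -- put everything together
  have hsum1 : μ {ω | A t v ω = S ω}
      = ∑ c ∈ Finset.univ.filter (fun c : Fin n → Bool => g c), μ (Atom c) := by
    rw [hsetE, hunion]
    exact measure_biUnion_finset hdisj (fun c _ => hmeasAtom c)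
  have hsum2 : (∑ c ∈ Finset.univ.filter (fun c : Fin n → Bool => g c), μ (Atom c))
      = ∑ c : Fin n → Bool,
          (if g c then ENNReal.ofReal (∏ i, (if c i then p else 1-p)) else 0) := by
    rw [Finset.sum_filter]
    apply Finset.sum_congr rfl
    intro c _
    by_cases hc : g c
    · simp only [hc, if_true]
      rw [hAtomVal c]
      rw [ENNReal.ofReal_prod_of_nonneg (fun i _ => by split <;> linarith)]
      apply Finset.prod_congr rfl
      intro i _
      rw [apply_ite ENNReal.ofReal]
    · simp [hc]
  have hsum3 : (∑ c : Fin n → Bool,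
          (if g c then ENNReal.ofReal (∏ i, (if c i then p else 1-p)) else 0))
      = ENNReal.ofReal (∑ c : Fin n → Bool, (∏ i, (if c i then p else 1-p)) * ind g c) := by
    rw [ENNReal.ofReal_sum_of_nonneg]
    · apply Finset.sum_congr rfl
      intro c _
      by_cases hc : g c
      · simp [hc, ind]
      · simp [hc, ind]
    · intro c _
      have h1 : (0:ℝ) ≤ ∏ i, (if c i then p else 1-p) :=
        Finset.prod_nonneg (fun i _ => by split <;> linarith)
      have h2 : (0:ℝ) ≤ ind g c := by unfold ind; split <;> norm_num
      exact mul_nonneg h1 h2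
  calc ENNReal.ofReal p ≤ ENNReal.ofReal (Ex p n (ind g)) :=
        ENNReal.ofReal_le_ofReal (core g hgmono hgodd (le_of_lt hp) hp1)
    _ = μ {ω | A t v ω = S ω} := by rw [Ex_sum, ← hsum3, ← hsum2, ← hsum1]
end

section
/- Fix odd d ≥ 3 and a slow-growth function f, and let r0 be minimal with ((d+1)/(d-1))·2d·∑_{r>r0} ((d-1)/(d+1))^r f(r) < 1. For any graph G with degrees odd and at most d and n_r(G,i) ≤ f(r) for all i, r: if A^j_0 = s for all j within distance r0+2 of a vertex i, then under synchronous majority dynamics A^i_t = s for all t ≥ 0. -/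
/-- Fix odd `d ≥ 3`, a slow-growth function `f`, and let `r0` be minimal
with `((d+1)/(d-1))·2d·∑_{r>r0} ((d-1)/(d+1))^r f(r) < 1`. For any graph `G` with degrees
odd and at most `d` and `n_r(G,i) ≤ f(r)`: if all vertices within distance `r0+2` of `i`
initially hold opinion `s`, then `A^i_t = s` for all `t ≥ 0` (synchronous majority
dynamics). -/
theorem stmt_16 (d : ℕ) (hd : 3 ≤ d) (hdodd : Odd d) (f : ℕ → ℕ)
    (hf : Summable (fun r : ℕ => (((d : ℝ) - 1) / ((d : ℝ) + 1)) ^ r * (f r : ℝ)))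
    (r0 : ℕ)
    (hr0 : (((d : ℝ) + 1) / ((d : ℝ) - 1)) * (2 * d) *
      (∑' r : ℕ, if r0 < r then
        (((d : ℝ) - 1) / ((d : ℝ) + 1)) ^ r * (f r : ℝ) else 0) < 1)
    (hr0min : ∀ r0' : ℕ, r0' < r0 →
      ¬ ((((d : ℝ) + 1) / ((d : ℝ) - 1)) * (2 * d) *
        (∑' r : ℕ, if r0' < r then
          (((d : ℝ) - 1) / ((d : ℝ) + 1)) ^ r * (f r : ℝ) else 0) < 1))
    {V : Type*} (G : SimpleGraph V) [∀ v : V, Fintype (G.neighborSet v)]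
    (hconn : G.Connected)
    (hodd : ∀ v, Odd (G.degree v)) (hdeg : ∀ v, G.degree v ≤ d)
    (hgrowth : ∀ (i : V) (r : ℕ), {j | G.dist i j = r}.ncard ≤ f r)
    (A : ℕ → V → ℤ) (hAval : ∀ v, A 0 v = 1 ∨ A 0 v = -1)
    (hdyn : ∀ t v, A (t + 1) v =
      if 0 < ∑ j ∈ G.neighborFinset v, A t j then 1 else -1)
    (i : V) (s : ℤ) (hs : s = 1 ∨ s = -1)
    (hball : ∀ j : V, G.dist i j ≤ r0 + 2 → A 0 j = s) :
    ∀ t : ℕ, A t i = s := by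
  classical
  by_contra hcon
  push_neg at hcon
  obtain ⟨T, hT⟩ := hcon
  -- numeric setup
  set q : ℝ := ((d : ℝ) - 1) / ((d : ℝ) + 1) with hqdef
  have hdR : (3 : ℝ) ≤ (d : ℝ) := by exact_mod_cast hd
  have hd1 : (0 : ℝ) < (d : ℝ) - 1 := by linarith
  have hd2 : (0 : ℝ) < (d : ℝ) + 1 := by linarith
  have hq0 : 0 < q := div_pos hd1 hd2
  have hq1 : q < 1 := by
    rw [hqdef, div_lt_one hd2]; linarith
  have hqle1 : q ≤ 1 := le_of_lt hq1
  have hqmul : q * ((d : ℝ) + 1) = (d : ℝ) - 1 := by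
    rw [hqdef]; field_simp
  -- values are ±1
  have hval : ∀ t v, A t v = 1 ∨ A t v = -1 := by
    intro t v
    cases t with
    | zero => exact hAval v
    | succ t => rw [hdyn]; split <;> simp
  have hsi : A 0 i = s := hball i (by simp [SimpleGraph.dist_self])
  have hT1 : 1 ≤ T := by
    rcases Nat.eq_zero_or_pos T with h | h
    · exact absurd (h ▸ hsi) hT
    · exact h
  -- positive degrees
  have hdegpos : ∀ v, 1 ≤ G.degree v := fun v => (hodd v).pos
  -- balls are finite
  have hballfin : ∀ n : ℕ, {v : V | G.dist i v ≤ n}.Finite := by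
    intro n
    induction n with
    | zero =>
      refine Set.Finite.subset (Set.finite_singleton i) ?_
      intro v hv
      simp only [Set.mem_setOf_eq, Nat.le_zero] at hv
      have := (hconn.dist_eq_zero_iff (u := i) (v := v)).1 hv
      simp [this.symm]
    | succ n ih =>
      have hsub : {v : V | G.dist i v ≤ n + 1} ⊆
          {v : V | G.dist i v ≤ n} ∪ ⋃ u ∈ {v : V | G.dist i v ≤ n}, (G.neighborSet u) := by
        intro v hv
        simp only [Set.mem_setOf_eq] at hv
        rcases Nat.lt_or_ge (G.dist i v) (n + 1) with h | h
        · left; simpa using Nat.lt_succ_iff.mp h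
        · have hdist : G.dist i v = n + 1 := le_antisymm hv h
          have hne : G.dist i v ≠ 0 := by omega
          obtain ⟨p, hp⟩ := SimpleGraph.exists_walk_of_dist_ne_zero hne
          right
          -- take the penultimate vertex on a geodesic
          rcases hw : p.reverse with _ | ⟨huv, pr⟩
          · exfalso
            have : p.reverse.length = 0 := by rw [hw]; rfl
            rw [SimpleGraph.Walk.length_reverse] at this
            omega
          · rename_i u
            have hlen : p.reverse.length = n + 1 := by
              rw [SimpleGraph.Walk.length_reverse, hp, hdist]
            have hlenr : pr.length = n := by
              rw [hw] at hlen
              simpa using hlen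
            have hdu : G.dist i u ≤ n := by
              have h1 : G.dist u i ≤ pr.length := SimpleGraph.dist_le pr
              rw [SimpleGraph.dist_comm] at h1
              omega
            refine Set.mem_biUnion hdu ?_
            exact huv.symm
      refine Set.Finite.subset ?_ hsub
      refine Set.Finite.union ih (Set.Finite.biUnion ih ?_)
      intro u _
      exact (G.neighborSet u).toFinite
  -- majority lemma
  have hmaj : ∀ (v : V) (t : ℕ), A (t + 1) v ≠ s →
      G.degree v + 1 ≤ 2 * ((G.neighborFinset v).filter (fun u => A t u ≠ s)).card := by
    intro v t hbad
    set N := G.neighborFinset v with hN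
    set B := N.filter (fun u => A t u ≠ s) with hB
    set P := N.filter (fun u => ¬ A t u ≠ s) with hP
    have hcard : B.card + P.card = G.degree v := by
      rw [hB, hP, Finset.card_filter_add_card_filter_not, hN,
        G.card_neighborFinset_eq_degree]
    have hBs : ∀ u ∈ B, A t u = -s := by
      intro u hu
      rcases Finset.mem_filter.1 hu with ⟨-, h⟩
      rcases hval t u with h1 | h1 <;> rcases hs with h2 | h2 <;>
        simp [h1, h2] at h ⊢
    have hPs : ∀ u ∈ P, A t u = s := by
      intro u hu
      rcases Finset.mem_filter.1 hu with ⟨-, h⟩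
      exact not_not.1 h
    have hsplit : ∑ u ∈ N, A t u = (B.card : ℤ) * (-s) + (P.card : ℤ) * s := by
      rw [← Finset.sum_filter_add_sum_filter_not N (fun u => A t u ≠ s)]
      rw [← hB, ← hP]
      congr 1
      · rw [Finset.sum_congr rfl hBs, Finset.sum_const, nsmul_eq_mul]
      · rw [Finset.sum_congr rfl hPs, Finset.sum_const, nsmul_eq_mul]
    have hdynv := hdyn t v
    obtain ⟨k, hk⟩ := hodd v
    rcases hs with h2 | h2
    · have hnpos : ¬ (0 < ∑ u ∈ N, A t u) := by
        intro h
        rw [hdynv, if_pos h, h2] at hbad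
        exact hbad rfl
      push_neg at hnpos
      rw [hsplit, h2] at hnpos
      have hle : (P.card : ℤ) ≤ (B.card : ℤ) := by linarith
      have hle' : P.card ≤ B.card := by exact_mod_cast hle
      omega
    · have hpos : 0 < ∑ u ∈ N, A t u := by
        by_contra h
        rw [hdynv, if_neg h, h2] at hbad
        exact hbad rfl
      rw [hsplit, h2] at hpos
      have hlt : (P.card : ℤ) < (B.card : ℤ) := by linarith
      have hlt' : P.card < B.card := by exact_mod_cast hlt
      omega
  -- the set W of relevant ever-bad vertices
  set W : Finset V := (hballfin T).toFinset.filter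
      (fun v => ∃ t, t + G.dist i v ≤ T ∧ A t v ≠ s) with hWdef
  set tau : V → ℕ := fun v => sInf {t | A t v ≠ s} with htaudef
  have hWmem : ∀ v : V, v ∈ W ↔ G.dist i v ≤ T ∧ ∃ t, t + G.dist i v ≤ T ∧ A t v ≠ s := by
    intro v
    simp [hWdef, Set.Finite.mem_toFinset]
  have htau_le : ∀ (v : V) (t : ℕ), A t v ≠ s → tau v ≤ t := by
    intro v t h; exact Nat.sInf_le h
  have htau_bad : ∀ v ∈ W, A (tau v) v ≠ s := by
    intro v hv
    rcases (hWmem v).1 hv with ⟨-, t, -, hbad⟩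
    have hne : {t : ℕ | A t v ≠ s}.Nonempty := ⟨t, hbad⟩
    exact Nat.sInf_mem hne
  have htauW : ∀ v ∈ W, tau v + G.dist i v ≤ T := by
    intro v hv
    rcases (hWmem v).1 hv with ⟨-, t, hle, hbad⟩
    have := htau_le v t hbad
    omega
  have hiW : i ∈ W := by
    rw [hWmem]
    refine ⟨by simp [SimpleGraph.dist_self], T, by simp [SimpleGraph.dist_self], hT⟩
  have htaui : 1 ≤ tau i := by
    rcases Nat.eq_zero_or_pos (tau i) with h | h
    · exfalso; exact (h ▸ htau_bad i hiW) hsi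
    · exact h
  -- distance facts
  have hdadj : ∀ u v : V, G.Adj u v → G.dist i v ≤ G.dist i u + 1 := by
    intro u v huv
    have h1 : G.dist u v = 1 := SimpleGraph.dist_eq_one_iff_adj.2 huv
    have := hconn.dist_triangle (u := i) (v := u) (w := v)
    omega
  have hdadji : ∀ v : V, G.Adj i v → G.dist i v = 1 := by
    intro v hv; exact SimpleGraph.dist_eq_one_iff_adj.2 hv
  have hdne : ∀ v : V, v ≠ i → 1 ≤ G.dist i v := by
    intro v hv
    exact hconn.pos_dist_of_ne (fun h => hv h.symm)
  -- IN and OUT counts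
  set NIN : V → ℕ := fun x => ((G.neighborFinset x).filter
      (fun u => u ∈ W ∧ tau u < tau x)).card with hNINdef
  set NOUT : V → ℕ := fun v => ((G.neighborFinset v).filter
      (fun x => x ∈ W ∧ tau v < tau x)).card with hNOUTdef
  have hInOut : ∀ v : V, NIN v + NOUT v ≤ G.degree v := by
    intro v
    have hdisj : Disjoint ((G.neighborFinset v).filter (fun u => u ∈ W ∧ tau u < tau v))
        ((G.neighborFinset v).filter (fun x => x ∈ W ∧ tau v < tau x)) := by
      rw [Finset.disjoint_left]
      intro a h1 h2
      rcases Finset.mem_filter.1 h1 with ⟨-, -, hlt1⟩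
      rcases Finset.mem_filter.1 h2 with ⟨-, -, hlt2⟩
      omega
    have hunion := Finset.card_union_of_disjoint hdisj
    have hsub : ((G.neighborFinset v).filter (fun u => u ∈ W ∧ tau u < tau v)) ∪
        ((G.neighborFinset v).filter (fun x => x ∈ W ∧ tau v < tau x)) ⊆
        G.neighborFinset v :=
      Finset.union_subset (Finset.filter_subset _ _) (Finset.filter_subset _ _)
    have := Finset.card_le_card hsub
    rw [hunion] at this
    rw [hNINdef, hNOUTdef]
    simpa [G.card_neighborFinset_eq_degree v] using this
  have hNOUTdeg : ∀ v : V, NOUT v ≤ G.degree v := by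
    intro v
    calc NOUT v ≤ (G.neighborFinset v).card := Finset.card_filter_le _ _
    _ = G.degree v := G.card_neighborFinset_eq_degree v
  -- support closure: majority of in-neighbours
  have hIN : ∀ x ∈ W, 1 ≤ tau x → G.degree x + 1 ≤ 2 * NIN x := by
    intro x hx htx
    have hb := htau_bad x hx
    have heq : tau x - 1 + 1 = tau x := by omega
    have hmx := hmaj x (tau x - 1) (by rw [heq]; exact hb)
    refine le_trans hmx ?_
    have hmono : ((G.neighborFinset x).filter (fun u => A (tau x - 1) u ≠ s)) ⊆
        ((G.neighborFinset x).filter (fun u => u ∈ W ∧ tau u < tau x)) := by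
      intro u hu
      rcases Finset.mem_filter.1 hu with ⟨hmem, hbadu⟩
      have hadj : G.Adj x u := (G.mem_neighborFinset x u).1 hmem
      have hdle : G.dist i u ≤ G.dist i x + 1 := hdadj x u hadj
      have hTx := htauW x hx
      have htu : tau u ≤ tau x - 1 := htau_le u (tau x - 1) hbadu
      refine Finset.mem_filter.2 ⟨hmem, ?_, by omega⟩
      rw [hWmem]
      refine ⟨by omega, tau x - 1, by omega, hbadu⟩
    have hthis := Finset.card_le_card hmono
    have hNx : ((G.neighborFinset x).filter (fun u => u ∈ W ∧ tau u < tau x)).card = NIN x := rfl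
    omega
  -- the ledger
  set dQ : V → ℝ := fun v => q ^ (G.dist i v) with hdQdef
  have hdQpos : ∀ v, 0 < dQ v := fun v => pow_pos hq0 _
  set Total : ℝ := ∑ v ∈ W, ∑ x ∈ W,
      (if G.Adj v x ∧ tau v < tau x then dQ x else 0) with hTotaldef
  have hcardin : ∀ x : V, (W.filter (fun v => G.Adj v x ∧ tau v < tau x)).card = NIN x := by
    intro x
    have : (W.filter (fun v => G.Adj v x ∧ tau v < tau x)) =
        ((G.neighborFinset x).filter (fun u => u ∈ W ∧ tau u < tau x)) := by
      apply Finset.ext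
      intro v
      simp only [Finset.mem_filter, SimpleGraph.mem_neighborFinset]
      constructor
      · rintro ⟨h1, h2, h3⟩; exact ⟨h2.symm, h1, h3⟩
      · rintro ⟨h1, h2, h3⟩; exact ⟨h2, h1.symm, h3⟩
    rw [this]
  have hcardout : ∀ v : V, (W.filter (fun x => G.Adj v x ∧ tau v < tau x)).card = NOUT v := by
    intro v
    have : (W.filter (fun x => G.Adj v x ∧ tau v < tau x)) =
        ((G.neighborFinset v).filter (fun x => x ∈ W ∧ tau v < tau x)) := by
      apply Finset.ext
      intro x
      simp only [Finset.mem_filter, SimpleGraph.mem_neighborFinset]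
      constructor
      · rintro ⟨h1, h2, h3⟩; exact ⟨h2, h1, h3⟩
      · rintro ⟨h1, h2, h3⟩; exact ⟨h2, h1, h3⟩
    rw [this]
  have hreceiver : Total = ∑ x ∈ W, (NIN x : ℝ) * dQ x := by
    rw [hTotaldef, Finset.sum_comm]
    refine Finset.sum_congr rfl ?_
    intro x _
    rw [← Finset.sum_filter (fun v => G.Adj v x ∧ tau v < tau x) (fun _ => dQ x)]
    rw [Finset.sum_const, nsmul_eq_mul, hcardin x]
  have hsender : Total ≤ ∑ v ∈ W,
      (if v = i then (NOUT i : ℝ) * q else (NOUT v : ℝ) * q ^ (G.dist i v - 1)) := by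
    rw [hTotaldef]
    refine Finset.sum_le_sum ?_
    intro v _
    rw [← Finset.sum_filter (fun x => G.Adj v x ∧ tau v < tau x) (fun x => dQ x)]
    by_cases hvi : v = i
    · rw [if_pos hvi]
      have heach : ∀ x ∈ W.filter (fun x => G.Adj v x ∧ tau v < tau x), dQ x = q := by
        intro x hx
        rcases Finset.mem_filter.1 hx with ⟨-, hadj, -⟩
        rw [hvi] at hadj
        show q ^ (G.dist i x) = q
        rw [hdadji x hadj, pow_one]
      rw [Finset.sum_congr rfl heach, Finset.sum_const, nsmul_eq_mul, hcardout v, hvi]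
    · rw [if_neg hvi]
      have heach : ∀ x ∈ W.filter (fun x => G.Adj v x ∧ tau v < tau x),
          dQ x ≤ q ^ (G.dist i v - 1) := by
        intro x hx
        rcases Finset.mem_filter.1 hx with ⟨-, hadj, -⟩
        have hdl : G.dist i v ≤ G.dist i x + 1 := hdadj x v hadj.symm
        have hexp : G.dist i v - 1 ≤ G.dist i x := by omega
        exact pow_le_pow_of_le_one (le_of_lt hq0) hqle1 hexp
      calc ∑ x ∈ W.filter (fun x => G.Adj v x ∧ tau v < tau x), dQ x
          ≤ (W.filter (fun x => G.Adj v x ∧ tau v < tau x)).card • q ^ (G.dist i v - 1) :=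
            Finset.sum_le_card_nsmul _ _ _ heach
        _ = (NOUT v : ℝ) * q ^ (G.dist i v - 1) := by rw [nsmul_eq_mul, hcardout v]
  -- termwise comparison
  have hterm : ∀ v ∈ W,
      (if v = i then (NOUT i : ℝ) * q else (NOUT v : ℝ) * q ^ (G.dist i v - 1))
        - (NIN v : ℝ) * dQ v ≤
      (if v = i then (-1 : ℝ) else if tau v = 0 then (d : ℝ) * q ^ (G.dist i v - 1) else 0) := by
    intro v hv
    have hio : (NIN v : ℝ) + (NOUT v : ℝ) ≤ (G.degree v : ℝ) := by
      exact_mod_cast hInOut v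
    have hdg : (G.degree v : ℝ) ≤ (d : ℝ) := by exact_mod_cast hdeg v
    have hdg1 : (1 : ℝ) ≤ (G.degree v : ℝ) := by exact_mod_cast hdegpos v
    by_cases hvi : v = i
    · rw [if_pos hvi, if_pos hvi]
      have hmajv : (G.degree v : ℝ) + 1 ≤ 2 * (NIN v : ℝ) := by
        exact_mod_cast hIN v hv (by rw [hvi]; exact htaui)
      have hdQi : dQ v = 1 := by
        simp only [hdQdef]
        rw [hvi]
        simp [SimpleGraph.dist_self]
      have hni : (NOUT i : ℝ) = (NOUT v : ℝ) := by rw [hvi]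
      rw [hni, hdQi, mul_one]
      have e1 : ((d : ℝ) + 1) * ((NOUT v : ℝ) * q) = ((d : ℝ) - 1) * (NOUT v : ℝ) := by
        rw [← hqmul]; ring
      have hint1 : ((d : ℝ) - 1) * ((NIN v : ℝ) + (NOUT v : ℝ)) ≤
          ((d : ℝ) - 1) * (G.degree v : ℝ) :=
        mul_le_mul_of_nonneg_left hio (le_of_lt hd1)
      have hint2 : (d : ℝ) * ((G.degree v : ℝ) + 1) ≤ (d : ℝ) * (2 * (NIN v : ℝ)) :=
        mul_le_mul_of_nonneg_left hmajv (by linarith)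
      have key : ((d : ℝ) - 1) * (NOUT v : ℝ) + ((d : ℝ) + 1) ≤
          ((d : ℝ) + 1) * (NIN v : ℝ) := by linarith
      nlinarith [key, e1, hd2]
    · rw [if_neg hvi, if_neg hvi]
      have hqpow : (0 : ℝ) ≤ q ^ (G.dist i v - 1) := pow_nonneg (le_of_lt hq0) _
      have hdv1 : 1 ≤ G.dist i v := hdne v hvi
      have hdQv : dQ v = q ^ (G.dist i v - 1) * q := by
        simp only [hdQdef]
        rw [← pow_succ]
        congr 1
        omega
      by_cases htv : tau v = 0
      · rw [if_pos htv]
        have h1 : (NOUT v : ℝ) * q ^ (G.dist i v - 1) ≤ (d : ℝ) * q ^ (G.dist i v - 1) :=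
          mul_le_mul_of_nonneg_right (by linarith) hqpow
        have h2 : (0 : ℝ) ≤ (NIN v : ℝ) * dQ v :=
          mul_nonneg (Nat.cast_nonneg _) (le_of_lt (hdQpos v))
        linarith
      · rw [if_neg htv]
        have hmajv : (G.degree v : ℝ) + 1 ≤ 2 * (NIN v : ℝ) := by
          exact_mod_cast hIN v hv (Nat.pos_of_ne_zero htv)
        have hint1 : ((d : ℝ) + 1) * ((NIN v : ℝ) + (NOUT v : ℝ)) ≤
            ((d : ℝ) + 1) * (G.degree v : ℝ) :=
          mul_le_mul_of_nonneg_left hio (le_of_lt hd2)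
        have hint2 : (d : ℝ) * ((G.degree v : ℝ) + 1) ≤ (d : ℝ) * (2 * (NIN v : ℝ)) :=
          mul_le_mul_of_nonneg_left hmajv (by linarith)
        have key : ((d : ℝ) + 1) * (NOUT v : ℝ) ≤ ((d : ℝ) - 1) * (NIN v : ℝ) := by
          linarith
        have e2 : ((d : ℝ) + 1) * (q * (NIN v : ℝ)) = ((d : ℝ) - 1) * (NIN v : ℝ) := by
          rw [← hqmul]; ring
        have key2 : (NOUT v : ℝ) ≤ q * (NIN v : ℝ) :=
          le_of_mul_le_mul_left (key.trans_eq e2.symm) hd2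
        have h3 : (NOUT v : ℝ) * q ^ (G.dist i v - 1) ≤
            (q * (NIN v : ℝ)) * q ^ (G.dist i v - 1) :=
          mul_le_mul_of_nonneg_right key2 hqpow
        have e3 : (q * (NIN v : ℝ)) * q ^ (G.dist i v - 1) =
            (NIN v : ℝ) * (q ^ (G.dist i v - 1) * q) := by ring
        rw [hdQv]
        linarith [h3, e3.symm.le, e3.le]
  -- summing up
  have hsum0 : (0 : ℝ) ≤ ∑ v ∈ W,
      (if v = i then (-1 : ℝ) else if tau v = 0 then (d : ℝ) * q ^ (G.dist i v - 1) else 0) := by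
    have h1 : Total - Total ≤ ∑ v ∈ W, ((if v = i then (NOUT i : ℝ) * q
        else (NOUT v : ℝ) * q ^ (G.dist i v - 1)) - (NIN v : ℝ) * dQ v) := by
      rw [Finset.sum_sub_distrib]
      have := hsender
      rw [hreceiver] at *
      linarith
    simp only [sub_self] at h1
    calc (0 : ℝ) ≤ _ := h1
    _ ≤ _ := Finset.sum_le_sum hterm
  -- extract the source-sum
  have hsrc : (1 : ℝ) ≤ ∑ v ∈ (W.erase i).filter (fun v => tau v = 0),
      (d : ℝ) * q ^ (G.dist i v - 1) := by
    have hsplit := (Finset.add_sum_erase W (fun v => if v = i then (-1 : ℝ)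
      else if tau v = 0 then (d : ℝ) * q ^ (G.dist i v - 1) else 0) hiW).symm
    have h2 : ∑ v ∈ W.erase i, (if v = i then (-1 : ℝ)
        else if tau v = 0 then (d : ℝ) * q ^ (G.dist i v - 1) else 0)
        = ∑ v ∈ (W.erase i).filter (fun v => tau v = 0),
            (d : ℝ) * q ^ (G.dist i v - 1) := by
      rw [Finset.sum_filter]
      refine Finset.sum_congr rfl ?_
      intro v hv
      rw [if_neg (Finset.ne_of_mem_erase hv)]
    rw [hsplit, if_pos rfl, h2] at hsum0
    linarith
  -- source vertices are far away
  set src : Finset V := (W.erase i).filter (fun v => tau v = 0) with hsrcdef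
  have hsrcfar : ∀ v ∈ src, r0 + 3 ≤ G.dist i v ∧ G.dist i v ≤ T := by
    intro v hv
    rcases Finset.mem_filter.1 hv with ⟨hv1, hv2⟩
    have hvW : v ∈ W := Finset.mem_of_mem_erase hv1
    have hd2' : G.dist i v ≤ T := ((hWmem v).1 hvW).1
    have hbad0 : A 0 v ≠ s := by
      have := htau_bad v hvW
      rwa [hv2] at this
    have : ¬ G.dist i v ≤ r0 + 2 := fun h => hbad0 (hball v h)
    exact ⟨by omega, hd2'⟩
  -- multiply by q : q ≤ ∑ d * q^(dist)
  have hstep : q ≤ ∑ v ∈ src, (d : ℝ) * q ^ (G.dist i v) := by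
    have e : ∀ v ∈ src, ((d : ℝ) * q ^ (G.dist i v - 1)) * q = (d : ℝ) * q ^ (G.dist i v) := by
      intro v hv
      have h1 : 1 ≤ G.dist i v := by have := (hsrcfar v hv).1; omega
      have : q ^ (G.dist i v - 1) * q = q ^ (G.dist i v) := by
        rw [← pow_succ]
        congr 1
        omega
      rw [mul_assoc, this]
    calc q = 1 * q := (one_mul q).symm
    _ ≤ (∑ v ∈ src, (d : ℝ) * q ^ (G.dist i v - 1)) * q :=
        mul_le_mul_of_nonneg_right hsrc (le_of_lt hq0)
    _ = ∑ v ∈ src, ((d : ℝ) * q ^ (G.dist i v - 1)) * q := Finset.sum_mul _ _ _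
    _ = ∑ v ∈ src, (d : ℝ) * q ^ (G.dist i v) := Finset.sum_congr rfl e
  -- group by distance
  have hmaps : ∀ v ∈ src, G.dist i v ∈ Finset.Ioc r0 T := by
    intro v hv
    rcases hsrcfar v hv with ⟨h1, h2⟩
    rw [Finset.mem_Ioc]
    omega
  have hfiber : ∑ v ∈ src, (d : ℝ) * q ^ (G.dist i v)
      = ∑ r ∈ Finset.Ioc r0 T, ∑ v ∈ src.filter (fun v => G.dist i v = r),
          (d : ℝ) * q ^ (G.dist i v) :=
    (Finset.sum_fiberwise_of_maps_to hmaps _).symm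
  have hshell : ∀ r ∈ Finset.Ioc r0 T,
      ∑ v ∈ src.filter (fun v => G.dist i v = r), (d : ℝ) * q ^ (G.dist i v)
      ≤ (d : ℝ) * ((f r : ℝ) * q ^ r) := by
    intro r _
    have e : ∀ v ∈ src.filter (fun v => G.dist i v = r),
        (d : ℝ) * q ^ (G.dist i v) = (d : ℝ) * q ^ r := by
      intro v hv
      rcases Finset.mem_filter.1 hv with ⟨-, h⟩
      rw [h]
    rw [Finset.sum_congr rfl e, Finset.sum_const, nsmul_eq_mul]
    have hcard : ((src.filter (fun v => G.dist i v = r)).card : ℝ) ≤ (f r : ℝ) := by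
      have hsub : ↑(src.filter (fun v => G.dist i v = r)) ⊆ {j : V | G.dist i j = r} := by
        intro v hv
        simp only [Finset.coe_filter, Set.mem_setOf_eq] at hv ⊢
        exact hv.2
      have hfin : {j : V | G.dist i j = r}.Finite :=
        (hballfin r).subset (fun v hv => le_of_eq hv)
      have h1 : (src.filter (fun v => G.dist i v = r)).card
          = (↑(src.filter (fun v => G.dist i v = r)) : Set V).ncard :=
        (Set.ncard_coe_finset _).symm
      have h2 := Set.ncard_le_ncard hsub hfin
      have h3 := hgrowth i r
      have : (src.filter (fun v => G.dist i v = r)).card ≤ f r := by omega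
      exact_mod_cast this
    have hq' : (0 : ℝ) ≤ (d : ℝ) * q ^ r := by positivity
    calc ((src.filter (fun v => G.dist i v = r)).card : ℝ) * ((d : ℝ) * q ^ r)
        ≤ (f r : ℝ) * ((d : ℝ) * q ^ r) := mul_le_mul_of_nonneg_right hcard hq'
    _ = (d : ℝ) * ((f r : ℝ) * q ^ r) := by ring
  have htail : q ≤ (d : ℝ) * ∑ r ∈ Finset.Ioc r0 T, (q ^ r * (f r : ℝ)) := by
    calc q ≤ ∑ v ∈ src, (d : ℝ) * q ^ (G.dist i v) := hstep
    _ = ∑ r ∈ Finset.Ioc r0 T, ∑ v ∈ src.filter (fun v => G.dist i v = r),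
          (d : ℝ) * q ^ (G.dist i v) := hfiber
    _ ≤ ∑ r ∈ Finset.Ioc r0 T, (d : ℝ) * ((f r : ℝ) * q ^ r) :=
        Finset.sum_le_sum hshell
    _ = (d : ℝ) * ∑ r ∈ Finset.Ioc r0 T, (q ^ r * (f r : ℝ)) := by
        rw [Finset.mul_sum]
        refine Finset.sum_congr rfl ?_
        intro r _
        ring
  -- compare with the tsum
  have hFsummable : Summable (fun r : ℕ => if r0 < r then q ^ r * (f r : ℝ) else 0) := by
    refine (hf.indicator {r : ℕ | r0 < r}).congr ?_
    intro r
    by_cases h : r0 < r <;> simp [Set.indicator_apply, h]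
  have hFnonneg : ∀ r : ℕ, 0 ≤ (if r0 < r then q ^ r * (f r : ℝ) else 0) := by
    intro r
    split
    · positivity
    · exact le_refl 0
  have hsum_tsum : ∑ r ∈ Finset.Ioc r0 T, (q ^ r * (f r : ℝ))
      ≤ ∑' r : ℕ, (if r0 < r then q ^ r * (f r : ℝ) else 0) := by
    have he : ∑ r ∈ Finset.Ioc r0 T, (q ^ r * (f r : ℝ))
        = ∑ r ∈ Finset.Ioc r0 T, (if r0 < r then q ^ r * (f r : ℝ) else 0) := by
      refine Finset.sum_congr rfl ?_
      intro r hr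
      rw [if_pos (Finset.mem_Ioc.1 hr).1]
    rw [he]
    exact Summable.sum_le_tsum _ (fun r _ => hFnonneg r) hFsummable
  -- final contradiction
  have hqled : q ≤ (d : ℝ) * ∑' r : ℕ, (if r0 < r then q ^ r * (f r : ℝ) else 0) := by
    calc q ≤ (d : ℝ) * ∑ r ∈ Finset.Ioc r0 T, (q ^ r * (f r : ℝ)) := htail
    _ ≤ (d : ℝ) * ∑' r : ℕ, (if r0 < r then q ^ r * (f r : ℝ) else 0) := by
        refine mul_le_mul_of_nonneg_left hsum_tsum (by linarith)
  set tl : ℝ := ∑' r : ℕ, (if r0 < r then q ^ r * (f r : ℝ) else 0) with htl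
  have hc : (0 : ℝ) < 2 * ((d : ℝ) + 1) / ((d : ℝ) - 1) := by positivity
  have hmul := mul_le_mul_of_nonneg_left hqled (le_of_lt hc)
  have e1 : 2 * ((d : ℝ) + 1) / ((d : ℝ) - 1) * q = 2 := by
    rw [hqdef]
    field_simp
  have e2 : 2 * ((d : ℝ) + 1) / ((d : ℝ) - 1) * ((d : ℝ) * tl)
      = ((d : ℝ) + 1) / ((d : ℝ) - 1) * (2 * (d : ℝ)) * tl := by ring
  rw [e1, e2] at hmul
  linarith [hr0]
end

section
/- Let d ≥ 3 be odd and let H be the complete bipartite graph K_{d,d} with one edge {a,b} removed, possibly with a and b each attached to one additional outside vertex (so all degrees in the dynamics graph are d). Under synchronous majority dynamics, regardless of initial opinions on H and arbitrary opinions of the outside neighbors at every time: at time t = 2 all vertices on the side A containing a hold the value m_A (the majority of side A's initial opinions) and all vertices on side B hold m_B, and thereafter the opinions restricted to H have period at most two. -/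
lemma aux1 (d : ℕ) (hd : 3 ≤ d) (g : Fin d → ℤ) (q ε : ℤ)
    (hq : q = 1 ∨ q = -1) (hε : ε = 1 ∨ ε = -1)
    (hg : ∀ j : Fin d, j ≠ ⟨0, Nat.lt_of_lt_of_le (Nat.succ_pos 2) hd⟩ → g j = q) :
    (if 0 < (∑ j ∈ Finset.univ.erase ⟨0, Nat.lt_of_lt_of_le (Nat.succ_pos 2) hd⟩, g j) + ε then (1:ℤ) else -1) = q := by
  have hsum : ∑ j ∈ Finset.univ.erase (⟨0, Nat.lt_of_lt_of_le (Nat.succ_pos 2) hd⟩ : Fin d), g j = ((d:ℤ) - 1) * q := by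
    rw [Finset.sum_congr rfl (fun j hj => hg j (Finset.ne_of_mem_erase hj)),
      Finset.sum_const, Finset.card_erase_of_mem (Finset.mem_univ _), Finset.card_univ,
      Fintype.card_fin]
    rw [nsmul_eq_mul, Nat.cast_sub (by omega : 1 ≤ d)]
    push_cast
    ring
  rw [hsum]
  have hd' : (3:ℤ) ≤ (d:ℤ) := by exact_mod_cast hd
  rcases hq with h | h <;> subst h <;> rcases hε with h | h <;> subst h <;>
    [rw [if_pos (by nlinarith)]; rw [if_pos (by nlinarith)];
     rw [if_neg (by nlinarith)]; rw [if_neg (by nlinarith)]]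

lemma aux2 (d : ℕ) (hd : 3 ≤ d) (g : Fin d → ℤ) (q : ℤ)
    (hq : q = 1 ∨ q = -1) (hg0 : g ⟨0, Nat.lt_of_lt_of_le (Nat.succ_pos 2) hd⟩ = 1 ∨ g ⟨0, Nat.lt_of_lt_of_le (Nat.succ_pos 2) hd⟩ = -1)
    (hg : ∀ j : Fin d, j ≠ ⟨0, Nat.lt_of_lt_of_le (Nat.succ_pos 2) hd⟩ → g j = q) :
    (if 0 < ∑ j, g j then (1:ℤ) else -1) = q := by
  have hsplit : ∑ j, g j = (∑ j ∈ Finset.univ.erase (⟨0, Nat.lt_of_lt_of_le (Nat.succ_pos 2) hd⟩ : Fin d), g j)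
      + g ⟨0, Nat.lt_of_lt_of_le (Nat.succ_pos 2) hd⟩ := by
    rw [add_comm, Finset.add_sum_erase _ g (Finset.mem_univ _)]
  rw [hsplit]
  exact aux1 d hd g q _ hq hg0 hg

/-- Let `H = K_{d,d}` minus the edge `{a,b}` (sides `A`, `B` of size `d`,
`a ∈ A`, `b ∈ B`), with `a` and `b` each attached to one outside vertex whose opinions
`x t`, `y t` are arbitrary ±1 values at each time. Under synchronous majority dynamics,
at time `t = 2` every vertex on side `A` holds `m_A` (the majority of side `A`'s initial
opinions) and every vertex on side `B` holds `m_B`; thereafter the opinions on `H` have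
period at most two. Side `A` is `Sum.inl`, side `B` is `Sum.inr`, with
`a = Sum.inl ⟨0,_⟩` and `b = Sum.inr ⟨0,_⟩`. -/
theorem stmt_19 (d : ℕ) (hd : 3 ≤ d) (hdodd : Odd d)
    (x y : ℕ → ℤ)
    (hx : ∀ t, x t = 1 ∨ x t = -1) (hy : ∀ t, y t = 1 ∨ y t = -1)
    (A : ℕ → (Fin d ⊕ Fin d) → ℤ)
    (hA0 : ∀ u, A 0 u = 1 ∨ A 0 u = -1)
    -- a vertex of side A other than a sees all of side B
    (hdynA : ∀ t (i : Fin d), i ≠ ⟨0, by omega⟩ →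
      A (t + 1) (Sum.inl i) =
        if 0 < ∑ j : Fin d, A t (Sum.inr j) then 1 else -1)
    -- a sees all of side B except b, plus its outside neighbor with opinion x t
    (hdyna : ∀ t, A (t + 1) (Sum.inl ⟨0, by omega⟩) =
      if 0 < (∑ j ∈ Finset.univ.erase ⟨0, by omega⟩, A t (Sum.inr j)) + x t
        then 1 else -1)
    (hdynB : ∀ t (j : Fin d), j ≠ ⟨0, by omega⟩ →
      A (t + 1) (Sum.inr j) =
        if 0 < ∑ i : Fin d, A t (Sum.inl i) then 1 else -1)
    (hdynb : ∀ t, A (t + 1) (Sum.inr ⟨0, by omega⟩) =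
      if 0 < (∑ i ∈ Finset.univ.erase ⟨0, by omega⟩, A t (Sum.inl i)) + y t
        then 1 else -1) :
    (∀ i : Fin d, A 2 (Sum.inl i) =
      if 0 < ∑ i' : Fin d, A 0 (Sum.inl i') then 1 else -1) ∧
    (∀ j : Fin d, A 2 (Sum.inr j) =
      if 0 < ∑ j' : Fin d, A 0 (Sum.inr j') then 1 else -1) ∧
    (∀ t : ℕ, 2 ≤ t → ∀ u : Fin d ⊕ Fin d, A (t + 2) u = A t u) := by
  set mA : ℤ := if 0 < ∑ i' : Fin d, A 0 (Sum.inl i') then 1 else -1 with hmA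
  set mB : ℤ := if 0 < ∑ j' : Fin d, A 0 (Sum.inr j') then 1 else -1 with hmB
  have hmA' : mA = 1 ∨ mA = -1 := by rw [hmA]; split_ifs <;> simp
  have hmB' : mB = 1 ∨ mB = -1 := by rw [hmB]; split_ifs <;> simp
  -- time 1
  have h1A : ∀ i : Fin d, i ≠ ⟨0, by omega⟩ → A 1 (Sum.inl i) = mB := fun i hi => hdynA 0 i hi
  have h1B : ∀ j : Fin d, j ≠ ⟨0, by omega⟩ → A 1 (Sum.inr j) = mA := fun j hj => hdynB 0 j hj
  have h1a : A 1 (Sum.inl ⟨0, by omega⟩) = 1 ∨ A 1 (Sum.inl ⟨0, by omega⟩) = -1 := by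
    rw [hdyna 0]; split_ifs <;> simp
  have h1b : A 1 (Sum.inr ⟨0, by omega⟩) = 1 ∨ A 1 (Sum.inr ⟨0, by omega⟩) = -1 := by
    rw [hdynb 0]; split_ifs <;> simp
  -- time 2
  have h2A : ∀ i : Fin d, A 2 (Sum.inl i) = mA := by
    intro i
    by_cases hi : i = ⟨0, by omega⟩
    · subst hi
      rw [hdyna 1]
      exact aux1 d hd (fun j => A 1 (Sum.inr j)) mA (x 1) hmA' (hx 1) h1B
    · rw [hdynA 1 i hi]
      exact aux2 d hd (fun j => A 1 (Sum.inr j)) mA hmA' h1b h1B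
  have h2B : ∀ j : Fin d, A 2 (Sum.inr j) = mB := by
    intro j
    by_cases hj : j = ⟨0, by omega⟩
    · subst hj
      rw [hdynb 1]
      exact aux1 d hd (fun i => A 1 (Sum.inl i)) mB (y 1) hmB' (hy 1) h1A
    · rw [hdynB 1 j hj]
      exact aux2 d hd (fun i => A 1 (Sum.inl i)) mB hmB' h1a h1A
  -- one-step swap lemma
  have step : ∀ t (p q : ℤ), (p = 1 ∨ p = -1) → (q = 1 ∨ q = -1) →
      (∀ i : Fin d, A t (Sum.inl i) = p) → (∀ j : Fin d, A t (Sum.inr j) = q) →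
      (∀ i : Fin d, A (t + 1) (Sum.inl i) = q) ∧
      (∀ j : Fin d, A (t + 1) (Sum.inr j) = p) := by
    intro t p q hp hq hAt hBt
    constructor
    · intro i
      by_cases hi : i = ⟨0, by omega⟩
      · subst hi
        rw [hdyna t]
        exact aux1 d hd (fun j => A t (Sum.inr j)) q (x t) hq (hx t) (fun j _ => hBt j)
      · rw [hdynA t i hi]
        exact aux2 d hd (fun j => A t (Sum.inr j)) q hq (by simpa [hBt] using hq) (fun j _ => hBt j)
    · intro j
      by_cases hj : j = ⟨0, by omega⟩
      · subst hj
        rw [hdynb t]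
        exact aux1 d hd (fun i => A t (Sum.inl i)) p (y t) hp (hy t) (fun i _ => hAt i)
      · rw [hdynB t j hj]
        exact aux2 d hd (fun i => A t (Sum.inl i)) p hp (by simpa [hAt] using hp) (fun i _ => hAt i)
  -- main periodic description from time 2 on
  have main : ∀ t, (∀ i : Fin d, A (t + 2) (Sum.inl i) = if Even t then mA else mB) ∧
      (∀ j : Fin d, A (t + 2) (Sum.inr j) = if Even t then mB else mA) := by
    intro t
    induction t with
    | zero => simpa using ⟨h2A, h2B⟩
    | succ n ih =>
      have hp : (if Even n then mA else mB) = 1 ∨ (if Even n then mA else mB) = -1 := by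
        split_ifs <;> [exact hmA'; exact hmB']
      have hq : (if Even n then mB else mA) = 1 ∨ (if Even n then mB else mA) = -1 := by
        split_ifs <;> [exact hmB'; exact hmA']
      have hstep := step (n + 2) _ _ hp hq ih.1 ih.2
      have heo : Even (n + 1) ↔ ¬ Even n := Nat.even_add_one
      constructor
      · intro i
        have := hstep.1 i
        rw [show n + 1 + 2 = n + 2 + 1 from by omega]
        rw [this]
        by_cases h : Even n <;> simp [heo, h]
      · intro j
        have := hstep.2 j
        rw [show n + 1 + 2 = n + 2 + 1 from by omega]
        rw [this]
        by_cases h : Even n <;> simp [heo, h]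
  refine ⟨h2A, h2B, ?_⟩
  intro t ht u
  obtain ⟨s, rfl⟩ : ∃ s, t = s + 2 := ⟨t - 2, by omega⟩
  have h1 := main s
  have h2 := main (s + 2)
  have he : Even (s + 2) ↔ Even s := by simp [Nat.even_add]
  cases u with
  | inl i =>
    rw [show s + 2 + 2 = s + 2 + 2 from rfl, h2.1 i, h1.1 i]
    by_cases h : Even s <;> simp [he, h]
  | inr j =>
    rw [h2.2 j, h1.2 j]
    by_cases h : Even s <;> simp [he, h]
end
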